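/- arXiv:math/0505449 — 3 statements merged into one kernel-verified Lean document; each statement's English description precedes it below -/
import Mathlib

section
/- For all real α, γ > 0 with α + γ > d, and α ≠ d, γ ≠ d, there exists a constant C = C(α, γ, d) < ∞ such that for all nonzero k ∈ ℤ^d, the sum over all pairs (l, m) of nonzero elements of ℤ^d with l + m = k of 1/(|m|^α |l|^γ) is at most C (1 + |k|)^{-β}, where β = min{α, γ, α + γ − d}. -/
open Real

/-- Euclidean norm of a lattice point in `ℤ^d`. -/
noncomputable def latticeNorm {d : ℕ} (k : Fin d → ℤ) : ℝ :=
  Real.sqrt (∑ i, ((k i : ℝ)) ^ 2)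

section aux
open Finset

section basics
variable {d : ℕ}

lemma lnorm_nonneg (k : Fin d → ℤ) : 0 ≤ latticeNorm k := Real.sqrt_nonneg _

lemma lnorm_coord (k : Fin d → ℤ) (i : Fin d) : |(k i : ℝ)| ≤ latticeNorm k := by
  rw [latticeNorm, ← Real.sqrt_sq_eq_abs]
  exact Real.sqrt_le_sqrt (Finset.single_le_sum (f := fun i => ((k i : ℝ)) ^ 2)
    (fun _ _ => sq_nonneg _) (Finset.mem_univ i))

lemma one_le_lnorm {k : Fin d → ℤ} (hk : k ≠ 0) : 1 ≤ latticeNorm k := by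
  obtain ⟨i, hi⟩ : ∃ i, k i ≠ 0 := by
    by_contra h; push_neg at h; exact hk (funext h)
  calc (1:ℝ) ≤ |(k i : ℝ)| := by exact_mod_cast Int.one_le_abs hi
    _ ≤ _ := lnorm_coord k i

lemma lnorm_pos {k : Fin d → ℤ} (hk : k ≠ 0) : 0 < latticeNorm k :=
  lt_of_lt_of_le one_pos (one_le_lnorm hk)

lemma lnorm_eq_norm (k : Fin d → ℤ) :
    latticeNorm k = ‖(WithLp.equiv 2 (Fin d → ℝ)).symm (fun i => (k i : ℝ))‖ := by
  rw [EuclideanSpace.norm_eq]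
  simp [latticeNorm, sq_abs]

lemma lnorm_triangle (a b : Fin d → ℤ) :
    latticeNorm (a + b) ≤ latticeNorm a + latticeNorm b := by
  rw [lnorm_eq_norm, lnorm_eq_norm, lnorm_eq_norm]
  have : ((WithLp.equiv 2 (Fin d → ℝ)).symm (fun i => ((a + b) i : ℝ)))
      = (WithLp.equiv 2 (Fin d → ℝ)).symm (fun i => (a i : ℝ))
        + (WithLp.equiv 2 (Fin d → ℝ)).symm (fun i => (b i : ℝ)) := by
    ext i; push_cast; simp
  rw [this]
  exact norm_add_le _ _

lemma lnorm_split (k l : Fin d → ℤ) :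
    latticeNorm k ≤ latticeNorm l + latticeNorm (k - l) := by
  simpa using lnorm_triangle l (k - l)

lemma rpow_neg_le {a b : ℝ} (p : ℝ) (ha : 0 < a) (hab : a ≤ b) (hp : 0 ≤ p) :
    b ^ (-p) ≤ a ^ (-p) := by
  rw [Real.rpow_neg (ha.trans_le hab).le, Real.rpow_neg ha.le]
  exact inv_anti₀ (Real.rpow_pos_of_pos ha p) (Real.rpow_le_rpow ha.le hab hp)

lemma count_le (s : Finset (Fin d → ℤ)) (T : ℝ) (hT : 0 ≤ T)
    (h : ∀ l ∈ s, latticeNorm l ≤ T) : (s.card : ℝ) ≤ (2 * T + 1) ^ d := by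
  set N : ℤ := ⌊T⌋ with hN
  have hN0 : 0 ≤ N := Int.le_floor.2 (by simpa using hT)
  have hsub : s ⊆ Finset.Icc (fun _ => -N) (fun _ => N) := by
    intro l hl
    rw [Finset.mem_Icc]
    have hi : ∀ i, |l i| ≤ N := by
      intro i
      have h1 : |(l i : ℝ)| ≤ T := (lnorm_coord l i).trans (h l hl)
      rw [hN]; exact Int.le_floor.2 (by push_cast; exact h1)
    constructor <;> (intro i; have := hi i; rw [abs_le] at this)
    · exact this.1
    · exact this.2
  have hcard : (Finset.Icc (fun _ => -N) (fun _ : Fin d => N)).card = (2 * N + 1).toNat ^ d := by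
    rw [Pi.card_Icc]
    simp [Int.card_Icc]
    congr 1
    omega
  calc (s.card : ℝ) ≤ ((Finset.Icc (fun _ => -N) (fun _ : Fin d => N)).card : ℝ) := by
        exact_mod_cast Finset.card_le_card hsub
    _ = ((2 * N + 1).toNat : ℝ) ^ d := by rw [hcard]; push_cast; ring
    _ ≤ (2 * T + 1) ^ d := by
        apply pow_le_pow_left₀ (by positivity)
        have h2 : ((2 * N + 1).toNat : ℤ) = 2 * N + 1 := Int.toNat_of_nonneg (by omega)
        have h1 : ((2 * N + 1).toNat : ℝ) = 2 * (N : ℝ) + 1 := by exact_mod_cast congrArg (Int.cast : ℤ → ℝ) h2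
        rw [h1]
        have h3 : (N : ℝ) ≤ T := Int.floor_le T
        linarith

end basics

section shells
variable {d : ℕ}

lemma shell_sum (p : ℝ) (hp : 0 ≤ p) (j : ℕ) (s : Finset (Fin d → ℤ))
    (h : ∀ l ∈ s, (2:ℝ) ^ j ≤ latticeNorm l ∧ latticeNorm l < 2 ^ (j + 1)) :
    ∑ l ∈ s, latticeNorm l ^ (-p) ≤ 8 ^ d * ((2:ℝ) ^ j) ^ ((d:ℝ) - p) := by
  have h2j : (0:ℝ) < 2 ^ j := by positivity
  have hb : (0:ℝ) ≤ ((2:ℝ) ^ j) ^ (-p) := (Real.rpow_pos_of_pos h2j _).le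
  calc ∑ l ∈ s, latticeNorm l ^ (-p) ≤ ∑ l ∈ s, ((2:ℝ) ^ j) ^ (-p) :=
        Finset.sum_le_sum fun l hl => rpow_neg_le p h2j (h l hl).1 hp
    _ = (s.card : ℝ) * ((2:ℝ) ^ j) ^ (-p) := by rw [Finset.sum_const, nsmul_eq_mul]
    _ ≤ (2 * (2:ℝ) ^ (j+1) + 1) ^ d * ((2:ℝ) ^ j) ^ (-p) := by
        apply mul_le_mul_of_nonneg_right _ hb
        exact count_le s _ (by positivity) fun l hl => (h l hl).2.le
    _ ≤ ((2:ℝ) ^ (j+3)) ^ d * ((2:ℝ) ^ j) ^ (-p) := by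
        apply mul_le_mul_of_nonneg_right _ hb
        apply pow_le_pow_left₀ (by positivity)
        have h1 : (1:ℝ) ≤ 2 ^ (j+2) := one_le_pow₀ one_le_two
        calc 2 * (2:ℝ) ^ (j+1) + 1 = 2 ^ (j+2) + 1 := by ring
          _ ≤ 2 ^ (j+2) + 2 ^ (j+2) := by linarith
          _ = 2 ^ (j+3) := by ring
    _ = 8 ^ d * ((2:ℝ) ^ j) ^ ((d:ℝ) - p) := by
        have e1 : ((2:ℝ) ^ (j+3)) ^ d = ((2:ℝ) ^ j) ^ d * 8 ^ d := by
          rw [← mul_pow]; congr 1; ring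
        have e2 : ((2:ℝ)^j)^((d:ℝ)) * ((2:ℝ)^j)^(-p) = ((2:ℝ)^j)^((d:ℝ)-p) := by
          rw [← Real.rpow_add h2j]; ring_nf
        rw [e1, ← Real.rpow_natCast ((2:ℝ) ^ j) d, show ((2:ℝ)^j)^((d:ℝ)) * 8 ^ d * ((2:ℝ)^j)^(-p)
          = 8^d * (((2:ℝ)^j)^((d:ℝ)) * ((2:ℝ)^j)^(-p)) from by ring, e2]

/-- dyadic index of a lattice point -/
noncomputable def jfn {d : ℕ} (l : Fin d → ℤ) : ℕ := (⌊Real.logb 2 (latticeNorm l)⌋).toNat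

/-- dyadic index of a radius -/
noncomputable def Jr (R : ℝ) : ℕ := (⌊Real.logb 2 R⌋).toNat

lemma jfn_spec {l : Fin d → ℤ} (hl : l ≠ 0) :
    (2:ℝ) ^ (jfn l) ≤ latticeNorm l ∧ latticeNorm l < 2 ^ (jfn l + 1) := by
  have h1 : 1 ≤ latticeNorm l := one_le_lnorm hl
  have h0 : 0 < latticeNorm l := lt_of_lt_of_le one_pos h1
  have hlog : 0 ≤ Real.logb 2 (latticeNorm l) := Real.logb_nonneg one_lt_two h1
  have hfl : ((jfn l : ℤ) : ℝ) = (⌊Real.logb 2 (latticeNorm l)⌋ : ℝ) := by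
    rw [jfn, Int.toNat_of_nonneg (Int.le_floor.2 (by simpa using hlog))]
  have e1 : (jfn l : ℝ) ≤ Real.logb 2 (latticeNorm l) := by
    have := Int.floor_le (Real.logb 2 (latticeNorm l))
    push_cast at hfl ⊢; linarith
  have e2 : Real.logb 2 (latticeNorm l) < (jfn l : ℝ) + 1 := by
    have := Int.lt_floor_add_one (Real.logb 2 (latticeNorm l))
    push_cast at hfl ⊢; linarith
  constructor
  · calc (2:ℝ) ^ (jfn l) = (2:ℝ) ^ ((jfn l : ℕ) : ℝ) := (Real.rpow_natCast _ _).symm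
      _ ≤ (2:ℝ) ^ (Real.logb 2 (latticeNorm l)) :=
          Real.rpow_le_rpow_of_exponent_le one_le_two e1
      _ = latticeNorm l := Real.rpow_logb two_pos (by norm_num) h0
  · calc latticeNorm l = (2:ℝ) ^ (Real.logb 2 (latticeNorm l)) :=
          (Real.rpow_logb two_pos (by norm_num) h0).symm
      _ < (2:ℝ) ^ (((jfn l : ℕ) : ℝ) + 1) := Real.rpow_lt_rpow_of_exponent_lt one_lt_two e2
      _ = 2 ^ (jfn l + 1) := by
          rw [show ((jfn l : ℕ) : ℝ) + 1 = ((jfn l + 1 : ℕ) : ℝ) by push_cast; ring,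
            Real.rpow_natCast]

lemma Jr_upper {R : ℝ} (hR : 0 < R) : R < 2 ^ (Jr R + 1) := by
  rcases le_or_gt 1 R with h1 | h1
  · have hlog : 0 ≤ Real.logb 2 R := Real.logb_nonneg one_lt_two h1
    have hfl : ((Jr R : ℤ) : ℝ) = (⌊Real.logb 2 R⌋ : ℝ) := by
      rw [Jr, Int.toNat_of_nonneg (Int.le_floor.2 (by simpa using hlog))]
    have e2 : Real.logb 2 R < (Jr R : ℝ) + 1 := by
      have := Int.lt_floor_add_one (Real.logb 2 R)
      push_cast at hfl ⊢; linarith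
    calc R = (2:ℝ) ^ (Real.logb 2 R) := (Real.rpow_logb two_pos (by norm_num) hR).symm
      _ < (2:ℝ) ^ (((Jr R : ℕ) : ℝ) + 1) := Real.rpow_lt_rpow_of_exponent_lt one_lt_two e2
      _ = 2 ^ (Jr R + 1) := by
          rw [show ((Jr R : ℕ) : ℝ) + 1 = ((Jr R + 1 : ℕ) : ℝ) by push_cast; ring,
            Real.rpow_natCast]
  · have h2 : (1:ℝ) ≤ 2 ^ (Jr R + 1) := one_le_pow₀ one_le_two
    linarith

lemma Jr_le_max {R : ℝ} (hR : 0 < R) : (2:ℝ) ^ (Jr R) ≤ max R 1 := by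
  rcases le_or_gt 1 R with h1 | h1
  · have hlog : 0 ≤ Real.logb 2 R := Real.logb_nonneg one_lt_two h1
    have hfl : ((Jr R : ℤ) : ℝ) = (⌊Real.logb 2 R⌋ : ℝ) := by
      rw [Jr, Int.toNat_of_nonneg (Int.le_floor.2 (by simpa using hlog))]
    have e1 : (Jr R : ℝ) ≤ Real.logb 2 R := by
      have := Int.floor_le (Real.logb 2 R)
      push_cast at hfl ⊢; linarith
    calc (2:ℝ) ^ (Jr R) = (2:ℝ) ^ ((Jr R : ℕ) : ℝ) := (Real.rpow_natCast _ _).symm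
      _ ≤ (2:ℝ) ^ (Real.logb 2 R) := Real.rpow_le_rpow_of_exponent_le one_le_two e1
      _ = R := Real.rpow_logb two_pos (by norm_num) hR
      _ ≤ max R 1 := le_max_left _ _
  · have : Jr R = 0 := by
      rw [Jr, Int.toNat_of_nonpos]
      exact Int.floor_nonpos (Real.logb_nonpos one_lt_two hR.le h1.le)
    rw [this]; simpa using le_max_right R 1

lemma Jr_lower {R : ℝ} (hR : 1/2 ≤ R) : R / 2 < (2:ℝ) ^ (Jr R) := by
  rcases le_or_gt 1 R with h1 | h1
  · have := Jr_upper (by linarith : (0:ℝ) < R)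
    have e : (2:ℝ) ^ (Jr R + 1) = 2 * 2 ^ (Jr R) := by ring
    rw [e] at this; linarith
  · have h2 : (1:ℝ) ≤ 2 ^ (Jr R) := one_le_pow₀ one_le_two
    linarith

end shells

section mainsums
variable {d : ℕ}

lemma pow_swap (x : ℝ) (j : ℕ) : ((2:ℝ) ^ j) ^ x = ((2:ℝ) ^ x) ^ j := by
  rw [← Real.rpow_natCast 2 j, ← Real.rpow_mul (by norm_num),
    ← Real.rpow_natCast ((2:ℝ) ^ x) j, ← Real.rpow_mul (by norm_num), mul_comm]

lemma sum_ball (γ : ℝ) (hγ0 : 0 < γ) (hγd : γ < d) (R : ℝ) (hR : 0 < R)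
    (s : Finset (Fin d → ℤ)) (hs : ∀ l ∈ s, l ≠ 0 ∧ latticeNorm l ≤ R) :
    ∑ l ∈ s, latticeNorm l ^ (-γ) ≤ (8 ^ d * 2 ^ (d:ℝ) / (2 ^ ((d:ℝ) - γ) - 1)) * R ^ ((d:ℝ) - γ) := by
  set r : ℝ := 2 ^ ((d:ℝ) - γ) with hr
  have hr1 : 1 < r := by
    rw [hr, show (1:ℝ) = (2:ℝ) ^ (0:ℝ) from (Real.rpow_zero 2).symm]
    exact Real.rpow_lt_rpow_of_exponent_lt one_lt_two (by linarith)
  have hCpos : 0 < 8 ^ d * (2:ℝ) ^ (d:ℝ) / (r - 1) := by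
    apply div_pos (by positivity); linarith
  rcases s.eq_empty_or_nonempty with rfl | ⟨l₀, hl₀⟩
  · simp only [Finset.sum_empty]
    exact (mul_pos hCpos (Real.rpow_pos_of_pos hR _)).le
  have hR1 : 1 ≤ R := le_trans (one_le_lnorm (hs l₀ hl₀).1) (hs l₀ hl₀).2
  set J := Jr R with hJ
  have hmaps : ∀ l ∈ s, jfn l ∈ Finset.range (J + 1) := by
    intro l hl
    have hspec := jfn_spec (hs l hl).1
    have h1 : (2:ℝ) ^ (jfn l) ≤ R := hspec.1.trans (hs l hl).2
    have h2 : (2:ℝ) ^ (jfn l) < 2 ^ (J + 1) := lt_of_le_of_lt h1 (Jr_upper (by linarith))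
    rw [Finset.mem_range]
    exact (pow_lt_pow_iff_right₀ one_lt_two).1 h2
  calc ∑ l ∈ s, latticeNorm l ^ (-γ)
      = ∑ j ∈ Finset.range (J + 1), ∑ l ∈ s.filter (fun l => jfn l = j), latticeNorm l ^ (-γ) :=
        (Finset.sum_fiberwise_of_maps_to hmaps _).symm
    _ ≤ ∑ j ∈ Finset.range (J + 1), 8 ^ d * ((2:ℝ) ^ j) ^ ((d:ℝ) - γ) := by
        apply Finset.sum_le_sum
        intro j hj
        apply shell_sum γ hγ0.le
        intro l hl
        rw [Finset.mem_filter] at hl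
        have := jfn_spec (hs l hl.1).1
        rw [hl.2] at this
        exact this
    _ = 8 ^ d * ∑ j ∈ Finset.range (J + 1), r ^ j := by
        rw [Finset.mul_sum]
        exact Finset.sum_congr rfl fun j _ => by rw [pow_swap]
    _ ≤ 8 ^ d * (r ^ (J + 1) / (r - 1)) := by
        apply mul_le_mul_of_nonneg_left _ (by positivity)
        rw [geom_sum_eq (ne_of_gt hr1)]
        apply div_le_div_of_nonneg_right _ (by linarith)
        linarith [pow_pos (by linarith : (0:ℝ) < r) (J+1)]
    _ ≤ (8 ^ d * 2 ^ (d:ℝ) / (r - 1)) * R ^ ((d:ℝ) - γ) := by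
        have hswap : r ^ (J + 1) = ((2:ℝ) ^ (J+1)) ^ ((d:ℝ) - γ) := (pow_swap _ _).symm
        have h2J : (2:ℝ) ^ (J + 1) ≤ 2 * R := by
          have : (2:ℝ) ^ J ≤ R := by
            have := Jr_le_max (by linarith : (0:ℝ) < R)
            rwa [max_eq_left hR1] at this
          calc (2:ℝ) ^ (J+1) = 2 * 2 ^ J := by ring
            _ ≤ 2 * R := by linarith
        have hb : r ^ (J+1) ≤ 2 ^ ((d:ℝ)) * R ^ ((d:ℝ) - γ) := by
          rw [hswap]
          calc ((2:ℝ) ^ (J+1)) ^ ((d:ℝ) - γ) ≤ (2 * R) ^ ((d:ℝ) - γ) :=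
                Real.rpow_le_rpow (by positivity) h2J (by linarith)
            _ = 2 ^ ((d:ℝ) - γ) * R ^ ((d:ℝ) - γ) := Real.mul_rpow (by norm_num) hR.le
            _ ≤ 2 ^ ((d:ℝ)) * R ^ ((d:ℝ) - γ) := by
                apply mul_le_mul_of_nonneg_right _ (Real.rpow_nonneg hR.le _)
                exact Real.rpow_le_rpow_of_exponent_le one_le_two (by linarith)
        calc (8:ℝ) ^ d * (r ^ (J + 1) / (r - 1))
            ≤ 8 ^ d * ((2 ^ ((d:ℝ)) * R ^ ((d:ℝ) - γ)) / (r - 1)) := by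
              apply mul_le_mul_of_nonneg_left _ (by positivity)
              exact div_le_div_of_nonneg_right hb (by linarith)
          _ = (8 ^ d * 2 ^ (d:ℝ) / (r - 1)) * R ^ ((d:ℝ) - γ) := by ring

lemma sum_tail (p : ℝ) (hp : (d:ℝ) < p) (R : ℝ) (hR : 1/2 ≤ R)
    (s : Finset (Fin d → ℤ)) (hs : ∀ l ∈ s, l ≠ 0 ∧ R < latticeNorm l) :
    ∑ l ∈ s, latticeNorm l ^ (-p) ≤ (8 ^ d * 2 ^ p / (1 - 2 ^ ((d:ℝ) - p))) * R ^ ((d:ℝ) - p) := by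
  have hd0 : 0 ≤ p := le_of_lt (lt_of_le_of_lt (Nat.cast_nonneg d) hp)
  set r : ℝ := 2 ^ ((d:ℝ) - p) with hr
  have hr0 : 0 < r := Real.rpow_pos_of_pos two_pos _
  have hr1 : r < 1 := by
    rw [hr, show (1:ℝ) = (2:ℝ) ^ (0:ℝ) from (Real.rpow_zero 2).symm]
    exact Real.rpow_lt_rpow_of_exponent_lt one_lt_two (by linarith)
  have hRpow : 0 < R ^ ((d:ℝ) - p) := Real.rpow_pos_of_pos (by linarith) _
  have hCpos : (0:ℝ) < 8 ^ d * 2 ^ p / (1 - r) := by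
    apply div_pos (by positivity); linarith
  rcases s.eq_empty_or_nonempty with rfl | hne
  · simp only [Finset.sum_empty]; positivity
  set J := Jr R with hJ
  set M := s.sup jfn with hM
  have hmaps : ∀ l ∈ s, jfn l ∈ Finset.Ico J (M + 1) := by
    intro l hl
    rw [Finset.mem_Ico]
    refine ⟨?_, Nat.lt_succ_of_le (Finset.le_sup hl)⟩
    have hspec := jfn_spec (hs l hl).1
    have h1 : (2:ℝ) ^ J ≤ max R 1 := Jr_le_max (by linarith)
    have h2 : max R 1 ≤ latticeNorm l := max_le (hs l hl).2.le (one_le_lnorm (hs l hl).1)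
    have h3 : (2:ℝ) ^ J < 2 ^ (jfn l + 1) := lt_of_le_of_lt (h1.trans h2) hspec.2
    have := (pow_lt_pow_iff_right₀ one_lt_two).1 h3
    omega
  have hJM : J ≤ M + 1 := by
    obtain ⟨l₀, hl₀⟩ := hne
    have := hmaps l₀ hl₀
    rw [Finset.mem_Ico] at this
    omega
  calc ∑ l ∈ s, latticeNorm l ^ (-p)
      = ∑ j ∈ Finset.Ico J (M + 1), ∑ l ∈ s.filter (fun l => jfn l = j), latticeNorm l ^ (-p) :=
        (Finset.sum_fiberwise_of_maps_to hmaps _).symm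
    _ ≤ ∑ j ∈ Finset.Ico J (M + 1), 8 ^ d * ((2:ℝ) ^ j) ^ ((d:ℝ) - p) := by
        apply Finset.sum_le_sum
        intro j hj
        apply shell_sum p hd0
        intro l hl
        rw [Finset.mem_filter] at hl
        have := jfn_spec (hs l hl.1).1
        rw [hl.2] at this
        exact this
    _ = 8 ^ d * ∑ j ∈ Finset.Ico J (M + 1), r ^ j := by
        rw [Finset.mul_sum]
        exact Finset.sum_congr rfl fun j _ => by rw [pow_swap]
    _ ≤ 8 ^ d * (r ^ J / (1 - r)) := by
        apply mul_le_mul_of_nonneg_left _ (by positivity)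
        rw [geom_sum_Ico' (ne_of_lt hr1) hJM]
        apply div_le_div_of_nonneg_right _ (by linarith)
        linarith [pow_pos hr0 (M+1)]
    _ ≤ (8 ^ d * 2 ^ p / (1 - r)) * R ^ ((d:ℝ) - p) := by
        have hJlow : R / 2 ≤ (2:ℝ) ^ J := (Jr_lower hR).le
        have hb : r ^ J ≤ 2 ^ p * R ^ ((d:ℝ) - p) := by
          rw [← pow_swap]
          calc ((2:ℝ) ^ J) ^ ((d:ℝ) - p) ≤ (R / 2) ^ ((d:ℝ) - p) := by
                have : ((2:ℝ) ^ J) ^ ((d:ℝ) - p) = ((2:ℝ)^J) ^ (-(p - (d:ℝ))) := by ring_nf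
                rw [this, show (R/2) ^ ((d:ℝ)-p) = (R/2) ^ (-(p - (d:ℝ))) from by ring_nf]
                exact rpow_neg_le _ (by linarith) hJlow (by linarith)
            _ = R ^ ((d:ℝ) - p) * (2:ℝ) ^ (p - (d:ℝ)) := by
                rw [Real.div_rpow (by linarith) (by norm_num), div_eq_mul_inv,
                  ← Real.rpow_neg (by norm_num : (0:ℝ) ≤ 2), neg_sub]
            _ ≤ R ^ ((d:ℝ) - p) * (2:ℝ) ^ p := by
                apply mul_le_mul_of_nonneg_left _ hRpow.le
                exact Real.rpow_le_rpow_of_exponent_le one_le_two (by linarith)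
            _ = 2 ^ p * R ^ ((d:ℝ) - p) := by ring
        calc (8:ℝ) ^ d * (r ^ J / (1 - r))
            ≤ 8 ^ d * ((2 ^ p * R ^ ((d:ℝ) - p)) / (1 - r)) := by
              apply mul_le_mul_of_nonneg_left _ (by positivity)
              exact div_le_div_of_nonneg_right hb (by linarith)
          _ = (8 ^ d * 2 ^ p / (1 - r)) * R ^ ((d:ℝ) - p) := by ring

end mainsums

section assembly
variable {d : ℕ}

lemma term_eq {a b : ℝ} (α γ : ℝ) (ha : 0 < a) (hb : 0 < b) :
    1 / (a ^ α * b ^ γ) = a ^ (-α) * b ^ (-γ) := by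
  rw [Real.rpow_neg ha.le, Real.rpow_neg hb.le, one_div, mul_inv]

lemma both_bound {a b α γ : ℝ} (ha : 0 < a) (hb : 0 < b) (hα : 0 ≤ α) (hγ : 0 ≤ γ) :
    a ^ (-α) * b ^ (-γ) ≤ a ^ (-(α + γ)) + b ^ (-(α + γ)) := by
  rcases le_total a b with h | h
  · have h1 : b ^ (-γ) ≤ a ^ (-γ) := rpow_neg_le γ ha h hγ
    have h2 : a ^ (-α) * b ^ (-γ) ≤ a ^ (-α) * a ^ (-γ) :=
      mul_le_mul_of_nonneg_left h1 (Real.rpow_nonneg ha.le _)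
    have h3 : a ^ (-α) * a ^ (-γ) = a ^ (-(α + γ)) := by
      rw [← Real.rpow_add ha]; ring_nf
    have h4 : 0 ≤ b ^ (-(α + γ)) := Real.rpow_nonneg hb.le _
    linarith
  · have h1 : a ^ (-α) ≤ b ^ (-α) := rpow_neg_le α hb h hα
    have h2 : a ^ (-α) * b ^ (-γ) ≤ b ^ (-α) * b ^ (-γ) :=
      mul_le_mul_of_nonneg_right h1 (Real.rpow_nonneg hb.le _)
    have h3 : b ^ (-α) * b ^ (-γ) = b ^ (-(α + γ)) := by
      rw [← Real.rpow_add hb]; ring_nf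
    have h4 : 0 ≤ a ^ (-(α + γ)) := Real.rpow_nonneg ha.le _
    linarith

lemma final_cmp {K x c β : ℝ} (hK : 1 ≤ K) (hβ : 0 < β) (hβx : β ≤ x) (hxc : x ≤ c) :
    (K / 2) ^ (-x) ≤ 4 ^ c * (1 + K) ^ (-β) := by
  have h1 : (1 + K) / 4 ≤ K / 2 := by linarith
  have h2 : (0:ℝ) < (1 + K) / 4 := by linarith
  calc (K / 2) ^ (-x) ≤ ((1 + K) / 4) ^ (-x) := rpow_neg_le _ h2 h1 (by linarith)
    _ = (1 + K) ^ (-x) * 4 ^ x := by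
        rw [Real.div_rpow (by linarith) (by norm_num), div_eq_mul_inv,
          Real.rpow_neg (by norm_num : (0:ℝ) ≤ 4) x, inv_inv]
    _ ≤ (1 + K) ^ (-β) * 4 ^ c := by
        apply mul_le_mul
        · exact Real.rpow_le_rpow_of_exponent_le (by linarith) (by linarith)
        · exact Real.rpow_le_rpow_of_exponent_le (by norm_num) hxc
        · positivity
        · positivity
    _ = 4 ^ c * (1 + K) ^ (-β) := mul_comm _ _

lemma region_ball (θ : ℝ) (hθ : 0 < θ) (hθd : θ ≠ (d:ℝ)) :
    ∃ E : ℝ, 0 < E ∧ ∀ R : ℝ, 1/2 ≤ R → ∀ s : Finset (Fin d → ℤ),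
      (∀ l ∈ s, l ≠ 0 ∧ latticeNorm l ≤ R) →
      ∑ l ∈ s, latticeNorm l ^ (-θ) ≤ E * R ^ (max ((d:ℝ) - θ) 0) := by
  rcases lt_or_gt_of_ne hθd with h | h
  · have hr1 : (1:ℝ) < 2 ^ ((d:ℝ) - θ) := by
      rw [show (1:ℝ) = (2:ℝ) ^ (0:ℝ) from (Real.rpow_zero 2).symm]
      exact Real.rpow_lt_rpow_of_exponent_lt one_lt_two (by linarith)
    refine ⟨8 ^ d * 2 ^ (d:ℝ) / (2 ^ ((d:ℝ) - θ) - 1), div_pos (by positivity) (by linarith), ?_⟩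
    intro R hR s hs
    rw [max_eq_left (by linarith : (0:ℝ) ≤ (d:ℝ) - θ)]
    exact sum_ball θ hθ h R (by linarith) s hs
  · have hr1 : (2:ℝ) ^ ((d:ℝ) - θ) < 1 := by
      rw [show (1:ℝ) = (2:ℝ) ^ (0:ℝ) from (Real.rpow_zero 2).symm]
      exact Real.rpow_lt_rpow_of_exponent_lt one_lt_two (by linarith)
    have hE0 : (0:ℝ) < (8 ^ d * 2 ^ θ / (1 - 2 ^ ((d:ℝ) - θ))) * (1/2) ^ ((d:ℝ) - θ) :=
      mul_pos (div_pos (by positivity) (by linarith)) (Real.rpow_pos_of_pos (by norm_num) _)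
    refine ⟨_, hE0, ?_⟩
    intro R hR s hs
    rw [max_eq_right (by linarith : (d:ℝ) - θ ≤ 0), Real.rpow_zero, mul_one]
    exact sum_tail θ h (1/2) le_rfl s fun l hl =>
      ⟨(hs l hl).1, lt_of_lt_of_le one_half_lt_one (one_le_lnorm (hs l hl).1)⟩

end assembly

end aux

/-- Lemma 2.2 (non-logarithmic case): for `α, γ > 0` with `α + γ > d`, `α ≠ d`, `γ ≠ d`,
there is `C < ∞` such that for every nonzero `k ∈ ℤ^d`,
`∑_{l+m=k, l≠0, m≠0} 1/(|m|^α |l|^γ) ≤ C (1+|k|)^{-β}` with `β = min{α, γ, α+γ-d}`. -/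
theorem stmt0 (d : ℕ) (hd : 0 < d) (α γ : ℝ) (hα : 0 < α) (hγ : 0 < γ)
    (hsum : (d : ℝ) < α + γ) (hαd : α ≠ (d : ℝ)) (hγd : γ ≠ (d : ℝ)) :
    ∃ C : ℝ, 0 < C ∧ ∀ k : Fin d → ℤ, k ≠ 0 →
      (∑' l : Fin d → ℤ,
          if l ≠ 0 ∧ k - l ≠ 0 then
            1 / (latticeNorm (k - l) ^ α * latticeNorm l ^ γ)
          else 0)
        ≤ C * (1 + latticeNorm k) ^ (-(min α (min γ (α + γ - d)))) := by
  classical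
  obtain ⟨E1, hE1, hEγ⟩ := region_ball (d := d) γ hγ hγd
  obtain ⟨E2, hE2, hEα⟩ := region_ball (d := d) α hα hαd
  set p : ℝ := α + γ with hp
  have hr1 : (2:ℝ) ^ ((d:ℝ) - p) < 1 := by
    rw [show (1:ℝ) = (2:ℝ) ^ (0:ℝ) from (Real.rpow_zero 2).symm]
    exact Real.rpow_lt_rpow_of_exponent_lt one_lt_two (by linarith)
  set Ct : ℝ := 8 ^ d * 2 ^ p / (1 - 2 ^ ((d:ℝ) - p)) with hCt
  have hCt0 : 0 < Ct := div_pos (by positivity) (by linarith)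
  set β : ℝ := min α (min γ (α + γ - (d:ℝ))) with hβ
  have hβ0 : 0 < β := lt_min hα (lt_min hγ (by linarith))
  have hβα : β ≤ α := min_le_left _ _
  have hβγ : β ≤ γ := (min_le_right _ _).trans (min_le_left _ _)
  have hβp : β ≤ α + γ - (d:ℝ) := (min_le_right _ _).trans (min_le_right _ _)
  set C : ℝ := 4 ^ p * (E1 + E2 + 2 * Ct) + 1 with hC
  have h4p : (0:ℝ) < 4 ^ p := Real.rpow_pos_of_pos (by norm_num) _
  have hC0 : 0 < C := by
    have : 0 < E1 + E2 + 2 * Ct := by linarith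
    have := mul_pos h4p this
    rw [hC]; linarith
  refine ⟨C, hC0, ?_⟩
  intro k hk
  have hK1 : 1 ≤ latticeNorm k := one_le_lnorm hk
  set K : ℝ := latticeNorm k with hKdef
  have hpow0 : (0:ℝ) ≤ (1 + K) ^ (-β) := Real.rpow_nonneg (by linarith) _
  have hR : (1:ℝ)/2 ≤ K/2 := by linarith
  have hR0 : (0:ℝ) < K/2 := by linarith
  have key : ∀ s : Finset (Fin d → ℤ),
      ∑ l ∈ s, (if l ≠ 0 ∧ k - l ≠ 0 then
        1 / (latticeNorm (k - l) ^ α * latticeNorm l ^ γ) else 0) ≤ C * (1 + K) ^ (-β) := by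
    intro s
    rw [← Finset.sum_filter]
    set s' := s.filter (fun l => l ≠ 0 ∧ k - l ≠ 0) with hs'def
    have hs'mem : ∀ l ∈ s', l ≠ 0 ∧ k - l ≠ 0 := fun l hl => (Finset.mem_filter.1 hl).2
    rw [← Finset.sum_filter_add_sum_filter_not s' (fun l => latticeNorm l ≤ K/2)]
    set s1 := s'.filter (fun l => latticeNorm l ≤ K/2) with hs1def
    set s'' := s'.filter (fun l => ¬ latticeNorm l ≤ K/2) with hs''def
    rw [← Finset.sum_filter_add_sum_filter_not s'' (fun l => latticeNorm (k - l) ≤ K/2)]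
    set s2 := s''.filter (fun l => latticeNorm (k - l) ≤ K/2) with hs2def
    set s3 := s''.filter (fun l => ¬ latticeNorm (k - l) ≤ K/2) with hs3def
    -- region 1
    have hmem1 : ∀ l ∈ s1, (l ≠ 0 ∧ k - l ≠ 0) ∧ latticeNorm l ≤ K/2 := by
      intro l hl
      rw [hs1def, Finset.mem_filter] at hl
      exact ⟨hs'mem l hl.1, hl.2⟩
    have hb1 : ∑ l ∈ s1, 1 / (latticeNorm (k - l) ^ α * latticeNorm l ^ γ)
        ≤ E1 * (4 ^ p * (1 + K) ^ (-β)) := by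
      have step1 : ∑ l ∈ s1, 1 / (latticeNorm (k - l) ^ α * latticeNorm l ^ γ)
          ≤ ∑ l ∈ s1, (K/2) ^ (-α) * latticeNorm l ^ (-γ) := by
        apply Finset.sum_le_sum
        intro l hl
        obtain ⟨⟨hl0, hkl0⟩, hlR⟩ := hmem1 l hl
        rw [term_eq α γ (lnorm_pos hkl0) (lnorm_pos hl0)]
        apply mul_le_mul_of_nonneg_right _ (Real.rpow_nonneg (lnorm_nonneg _) _)
        apply rpow_neg_le α hR0 _ hα.le
        have := lnorm_split k l
        linarith
      have step2 : ∑ l ∈ s1, latticeNorm l ^ (-γ) ≤ E1 * (K/2) ^ (max ((d:ℝ) - γ) 0) :=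
        hEγ (K/2) hR s1 fun l hl => ⟨(hmem1 l hl).1.1, (hmem1 l hl).2⟩
      have hx : β ≤ α - max ((d:ℝ) - γ) 0 := by
        rcases le_total ((d:ℝ) - γ) 0 with h | h
        · rw [max_eq_right h]; linarith
        · rw [max_eq_left h]; linarith
      have hxc : α - max ((d:ℝ) - γ) 0 ≤ p := by
        have := le_max_right ((d:ℝ) - γ) 0
        rw [hp]; linarith
      have cmp := final_cmp (x := α - max ((d:ℝ) - γ) 0) (c := p) hK1 hβ0 hx hxc
      calc ∑ l ∈ s1, 1 / (latticeNorm (k - l) ^ α * latticeNorm l ^ γ)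
          ≤ ∑ l ∈ s1, (K/2) ^ (-α) * latticeNorm l ^ (-γ) := step1
        _ = (K/2) ^ (-α) * ∑ l ∈ s1, latticeNorm l ^ (-γ) := by rw [Finset.mul_sum]
        _ ≤ (K/2) ^ (-α) * (E1 * (K/2) ^ (max ((d:ℝ) - γ) 0)) :=
            mul_le_mul_of_nonneg_left step2 (Real.rpow_nonneg hR0.le _)
        _ = E1 * ((K/2) ^ (-α) * (K/2) ^ (max ((d:ℝ) - γ) 0)) := by ring
        _ = E1 * (K/2) ^ (-(α - max ((d:ℝ) - γ) 0)) := by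
            rw [← Real.rpow_add hR0]; ring_nf
        _ ≤ E1 * (4 ^ p * (1 + K) ^ (-β)) := mul_le_mul_of_nonneg_left cmp hE1.le
    -- region 2
    have hmem2 : ∀ l ∈ s2, (l ≠ 0 ∧ k - l ≠ 0) ∧ K/2 < latticeNorm l ∧ latticeNorm (k - l) ≤ K/2 := by
      intro l hl
      rw [hs2def, Finset.mem_filter] at hl
      obtain ⟨hl'', hkl⟩ := hl
      rw [hs''def, Finset.mem_filter] at hl''
      exact ⟨hs'mem l hl''.1, not_le.1 hl''.2, hkl⟩
    have hinj2 : ∀ x ∈ s2, ∀ y ∈ s2, k - x = k - y → x = y := by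
      intro x _ y _ h
      exact sub_right_injective h
    have hb2 : ∑ l ∈ s2, 1 / (latticeNorm (k - l) ^ α * latticeNorm l ^ γ)
        ≤ E2 * (4 ^ p * (1 + K) ^ (-β)) := by
      have step1 : ∑ l ∈ s2, 1 / (latticeNorm (k - l) ^ α * latticeNorm l ^ γ)
          ≤ ∑ l ∈ s2, latticeNorm (k - l) ^ (-α) * (K/2) ^ (-γ) := by
        apply Finset.sum_le_sum
        intro l hl
        obtain ⟨⟨hl0, hkl0⟩, hlR, hklR⟩ := hmem2 l hl
        rw [term_eq α γ (lnorm_pos hkl0) (lnorm_pos hl0)]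
        apply mul_le_mul_of_nonneg_left _ (Real.rpow_nonneg (lnorm_nonneg _) _)
        exact rpow_neg_le γ hR0 hlR.le hγ.le
      have step2 : ∑ l ∈ s2, latticeNorm (k - l) ^ (-α)
          ≤ E2 * (K/2) ^ (max ((d:ℝ) - α) 0) := by
        have heq : ∑ m ∈ s2.image (fun l => k - l), latticeNorm m ^ (-α)
            = ∑ l ∈ s2, latticeNorm (k - l) ^ (-α) := Finset.sum_image hinj2
        rw [← heq]
        apply hEα (K/2) hR _
        intro m hm
        rw [Finset.mem_image] at hm
        obtain ⟨l, hl, rfl⟩ := hm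
        exact ⟨(hmem2 l hl).1.2, (hmem2 l hl).2.2⟩
      have hx : β ≤ γ - max ((d:ℝ) - α) 0 := by
        rcases le_total ((d:ℝ) - α) 0 with h | h
        · rw [max_eq_right h]; linarith
        · rw [max_eq_left h]; linarith
      have hxc : γ - max ((d:ℝ) - α) 0 ≤ p := by
        have := le_max_right ((d:ℝ) - α) 0
        rw [hp]; linarith
      have cmp := final_cmp (x := γ - max ((d:ℝ) - α) 0) (c := p) hK1 hβ0 hx hxc
      calc ∑ l ∈ s2, 1 / (latticeNorm (k - l) ^ α * latticeNorm l ^ γ)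
          ≤ ∑ l ∈ s2, latticeNorm (k - l) ^ (-α) * (K/2) ^ (-γ) := step1
        _ = (K/2) ^ (-γ) * ∑ l ∈ s2, latticeNorm (k - l) ^ (-α) := by
            rw [Finset.mul_sum]; exact Finset.sum_congr rfl fun l _ => by ring
        _ ≤ (K/2) ^ (-γ) * (E2 * (K/2) ^ (max ((d:ℝ) - α) 0)) :=
            mul_le_mul_of_nonneg_left step2 (Real.rpow_nonneg hR0.le _)
        _ = E2 * ((K/2) ^ (-γ) * (K/2) ^ (max ((d:ℝ) - α) 0)) := by ring
        _ = E2 * (K/2) ^ (-(γ - max ((d:ℝ) - α) 0)) := by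
            rw [← Real.rpow_add hR0]; ring_nf
        _ ≤ E2 * (4 ^ p * (1 + K) ^ (-β)) := mul_le_mul_of_nonneg_left cmp hE2.le
    -- region 3
    have hmem3 : ∀ l ∈ s3, (l ≠ 0 ∧ k - l ≠ 0) ∧ K/2 < latticeNorm l ∧ K/2 < latticeNorm (k - l) := by
      intro l hl
      rw [hs3def, Finset.mem_filter] at hl
      obtain ⟨hl'', hkl⟩ := hl
      rw [hs''def, Finset.mem_filter] at hl''
      exact ⟨hs'mem l hl''.1, not_le.1 hl''.2, not_le.1 hkl⟩
    have hinj3 : ∀ x ∈ s3, ∀ y ∈ s3, k - x = k - y → x = y := by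
      intro x _ y _ h
      exact sub_right_injective h
    have hb3 : ∑ l ∈ s3, 1 / (latticeNorm (k - l) ^ α * latticeNorm l ^ γ)
        ≤ 2 * Ct * (4 ^ p * (1 + K) ^ (-β)) := by
      have step1 : ∑ l ∈ s3, 1 / (latticeNorm (k - l) ^ α * latticeNorm l ^ γ)
          ≤ ∑ l ∈ s3, (latticeNorm l ^ (-p) + latticeNorm (k - l) ^ (-p)) := by
        apply Finset.sum_le_sum
        intro l hl
        obtain ⟨⟨hl0, hkl0⟩, _, _⟩ := hmem3 l hl
        rw [term_eq α γ (lnorm_pos hkl0) (lnorm_pos hl0), mul_comm]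
        have := both_bound (lnorm_pos hl0) (lnorm_pos hkl0) hγ.le hα.le
        rwa [show γ + α = p from by rw [hp]; ring] at this
      have t1 : ∑ l ∈ s3, latticeNorm l ^ (-p) ≤ Ct * (K/2) ^ ((d:ℝ) - p) :=
        sum_tail p hsum (K/2) hR s3 fun l hl => ⟨(hmem3 l hl).1.1, (hmem3 l hl).2.1⟩
      have t2 : ∑ l ∈ s3, latticeNorm (k - l) ^ (-p) ≤ Ct * (K/2) ^ ((d:ℝ) - p) := by
        have heq : ∑ m ∈ s3.image (fun l => k - l), latticeNorm m ^ (-p)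
            = ∑ l ∈ s3, latticeNorm (k - l) ^ (-p) := Finset.sum_image hinj3
        rw [← heq]
        apply sum_tail p hsum (K/2) hR _
        intro m hm
        rw [Finset.mem_image] at hm
        obtain ⟨l, hl, rfl⟩ := hm
        exact ⟨(hmem3 l hl).1.2, (hmem3 l hl).2.2⟩
      have cmp := final_cmp (x := p - (d:ℝ)) (c := p) (K := K) hK1 hβ0 (by rw [hp]; linarith)
        (by have : (0:ℝ) ≤ (d:ℝ) := Nat.cast_nonneg d; linarith)
      have hrw : (K/2) ^ ((d:ℝ) - p) = (K/2) ^ (-(p - (d:ℝ))) := by ring_nf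
      calc ∑ l ∈ s3, 1 / (latticeNorm (k - l) ^ α * latticeNorm l ^ γ)
          ≤ ∑ l ∈ s3, (latticeNorm l ^ (-p) + latticeNorm (k - l) ^ (-p)) := step1
        _ = ∑ l ∈ s3, latticeNorm l ^ (-p) + ∑ l ∈ s3, latticeNorm (k - l) ^ (-p) :=
            Finset.sum_add_distrib
        _ ≤ 2 * Ct * (K/2) ^ ((d:ℝ) - p) := by linarith
        _ = 2 * Ct * (K/2) ^ (-(p - (d:ℝ))) := by rw [hrw]
        _ ≤ 2 * Ct * (4 ^ p * (1 + K) ^ (-β)) := by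
            apply mul_le_mul_of_nonneg_left cmp (by linarith)
    have hfinal : E1 * (4 ^ p * (1 + K) ^ (-β)) + (E2 * (4 ^ p * (1 + K) ^ (-β))
        + 2 * Ct * (4 ^ p * (1 + K) ^ (-β))) ≤ C * (1 + K) ^ (-β) := by
      rw [hC]
      nlinarith [mul_nonneg h4p.le hpow0]
    linarith
  have hF0 : ∀ l : Fin d → ℤ, 0 ≤ (if l ≠ 0 ∧ k - l ≠ 0 then
      1 / (latticeNorm (k - l) ^ α * latticeNorm l ^ γ) else 0) := by
    intro l
    split
    · apply div_nonneg zero_le_one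
      exact mul_nonneg (Real.rpow_nonneg (lnorm_nonneg _) _) (Real.rpow_nonneg (lnorm_nonneg _) _)
    · exact le_rfl
  exact Summable.tsum_le_of_sum_le (summable_of_sum_le hF0 key) key
end

section
/- For all real α, γ > 0 with α + γ > d and α = d (or γ = d), there exists C < ∞ such that for all nonzero k ∈ ℤ^d, the sum over nonzero l, m ∈ ℤ^d with l + m = k of 1/(|m|^α |l|^γ) is at most C (1+|k|)^{-β} log(1+|k|), where β = min{α, γ, α+γ−d}. -/
open Real Finset

namespace LatAux
variable {d : ℕ}

/-- sup norm as a natural number -/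
def ns (l : Fin d → ℤ) : ℕ := Finset.univ.sup fun i => (l i).natAbs

noncomputable def toE (l : Fin d → ℤ) : EuclideanSpace ℝ (Fin d) :=
  (WithLp.equiv 2 _).symm fun i => (l i : ℝ)

lemma toE_apply (l : Fin d → ℤ) (i : Fin d) : toE l i = (l i : ℝ) := rfl

lemma latticeNorm_eq_norm (l : Fin d → ℤ) :
    latticeNorm l = ‖toE l‖ := by
  rw [EuclideanSpace.norm_eq]
  simp [latticeNorm, toE_apply, Real.norm_eq_abs, sq_abs]

lemma latticeNorm_nonneg (l : Fin d → ℤ) : 0 ≤ latticeNorm l := Real.sqrt_nonneg _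

lemma latticeNorm_triangle (x y : Fin d → ℤ) :
    latticeNorm (x + y) ≤ latticeNorm x + latticeNorm y := by
  rw [latticeNorm_eq_norm, latticeNorm_eq_norm, latticeNorm_eq_norm]
  have : toE (x + y) = toE x + toE y := by
    ext i
    show (((x+y) i : ℤ) : ℝ) = (x i : ℝ) + (y i : ℝ)
    simp [Pi.add_apply]
  rw [this]
  exact norm_add_le _ _

lemma abs_coord_le (l : Fin d → ℤ) (i : Fin d) : |(l i : ℝ)| ≤ latticeNorm l := by
  rw [← Real.sqrt_sq_eq_abs]
  apply Real.sqrt_le_sqrt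
  exact Finset.single_le_sum (f := fun j => ((l j : ℝ))^2) (fun j _ => sq_nonneg _) (mem_univ i)

lemma ns_le_latticeNorm (hd : 0 < d) (l : Fin d → ℤ) : (ns l : ℝ) ≤ latticeNorm l := by
  have hne : (Finset.univ : Finset (Fin d)).Nonempty := by
    simpa [Finset.univ_nonempty_iff] using Fin.pos_iff_nonempty.mp hd
  obtain ⟨i, -, hi⟩ := Finset.exists_mem_eq_sup univ hne fun i => (l i).natAbs
  rw [ns, hi]
  calc ((l i).natAbs : ℝ) = |(l i : ℝ)| := by
        rw [Nat.cast_natAbs]; push_cast; ring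
    _ ≤ latticeNorm l := abs_coord_le l i

lemma natAbs_le_ns (l : Fin d → ℤ) (i : Fin d) : (l i).natAbs ≤ ns l := by
  exact Finset.le_sup (f := fun j => (l j).natAbs) (mem_univ i)

lemma latticeNorm_le_d_mul_ns (hd : 0 < d) (l : Fin d → ℤ) :
    latticeNorm l ≤ (d : ℝ) * ns l := by
  have h1 : ∑ i, ((l i : ℝ))^2 ≤ (d:ℝ) * ((ns l : ℝ))^2 := by
    calc ∑ i, ((l i : ℝ))^2 ≤ ∑ _i : Fin d, ((ns l : ℝ))^2 := by
          apply Finset.sum_le_sum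
          intro i _
          have h := natAbs_le_ns l i
          have h2 : |(l i : ℝ)| ≤ (ns l : ℝ) := by
            calc |(l i : ℝ)| = ((l i).natAbs : ℝ) := by rw [Nat.cast_natAbs]; push_cast; ring
              _ ≤ _ := by exact_mod_cast h
          calc ((l i : ℝ))^2 = |(l i : ℝ)|^2 := (sq_abs _).symm
            _ ≤ ((ns l : ℝ))^2 := by
                apply pow_le_pow_left₀ (abs_nonneg _) h2
      _ = (d:ℝ) * ((ns l : ℝ))^2 := by simp [Finset.sum_const, Finset.card_univ]
  calc latticeNorm l ≤ Real.sqrt ((d:ℝ) * ((ns l:ℝ))^2) := Real.sqrt_le_sqrt h1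
    _ ≤ Real.sqrt (((d:ℝ) * (ns l:ℝ))^2) := by
        apply Real.sqrt_le_sqrt
        have hd1 : (1:ℝ) ≤ (d:ℝ) := by exact_mod_cast hd
        nlinarith [sq_nonneg ((ns l : ℝ)), (Nat.cast_nonneg (ns l) : (0:ℝ) ≤ (ns l : ℝ))]
    _ = (d:ℝ) * (ns l : ℝ) := Real.sqrt_sq (by positivity)

lemma ns_eq_zero_iff (l : Fin d → ℤ) : ns l = 0 ↔ l = 0 := by
  constructor
  · intro h
    funext i
    have := natAbs_le_ns l i
    rw [h, Nat.le_zero, Int.natAbs_eq_zero] at this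
    simpa using this
  · intro h; subst h; simp [ns]

lemma one_le_ns {l : Fin d → ℤ} (hl : l ≠ 0) : 1 ≤ ns l := by
  rcases Nat.eq_zero_or_pos (ns l) with h | h
  · exact absurd ((ns_eq_zero_iff l).mp h) hl
  · exact h

lemma one_le_latticeNorm (hd : 0 < d) {l : Fin d → ℤ} (hl : l ≠ 0) :
    1 ≤ latticeNorm l := by
  have h1 : (1:ℝ) ≤ (ns l : ℝ) := by exact_mod_cast one_le_ns hl
  exact h1.trans (ns_le_latticeNorm hd l)


/-- box of sup-norm radius n -/
noncomputable def box (d n : ℕ) : Finset (Fin d → ℤ) := Fintype.piFinset fun _ => Finset.Icc (-(n:ℤ)) n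

lemma mem_box {n : ℕ} {l : Fin d → ℤ} : l ∈ box d n ↔ ns l ≤ n := by
  rw [box, Fintype.mem_piFinset, ns]
  simp only [Finset.mem_Icc, Finset.sup_le_iff, mem_univ, forall_true_left]
  constructor
  · intro h i
    have := h i
    omega
  · intro h i
    have := h i
    omega

lemma card_box (d n : ℕ) : (box d n).card = (2*n+1)^d := by
  rw [box, Fintype.card_piFinset]
  have : (Finset.Icc (-(n:ℤ)) n).card = 2*n+1 := by
    rw [Int.card_Icc]
    omega
  simp [this]

lemma card_filter_ns_eq (hd : 0 < d) (F : Finset (Fin d → ℤ)) (n : ℕ) (hn : 1 ≤ n) :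
    ((F.filter fun l => ns l = n).card : ℝ) ≤ (2*d*3^(d-1) : ℝ) * (n:ℝ)^((d:ℝ)-1) := by
  have hsub : F.filter (fun l => ns l = n) ⊆ box d n \ box d (n-1) := by
    intro l hl
    rw [Finset.mem_filter] at hl
    rw [Finset.mem_sdiff, mem_box, mem_box]
    omega
  have hmono : box d (n-1) ⊆ box d n := by
    intro l hl; rw [mem_box] at *; omega
  have hcard : (F.filter fun l => ns l = n).card ≤ (2*n+1)^d - (2*n-1)^d := by
    calc (F.filter fun l => ns l = n).card ≤ (box d n \ box d (n-1)).card :=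
          Finset.card_le_card hsub
      _ = (box d n).card - (box d (n-1)).card := Finset.card_sdiff_of_subset hmono
      _ = (2*n+1)^d - (2*n-1)^d := by
          rw [card_box, card_box]
          congr 2
          omega
  have hpowle : (2*n-1)^d ≤ (2*n+1)^d := Nat.pow_le_pow_left (by omega) d
  have hcast : ((F.filter fun l => ns l = n).card : ℝ) ≤ (2*n+1:ℝ)^d - (2*n-1:ℝ)^d := by
    have := (Nat.cast_le (α := ℝ)).mpr hcard
    rw [Nat.cast_sub hpowle] at this
    push_cast at this
    have h1 : ((2*n-1 : ℕ) : ℝ) = 2*(n:ℝ)-1 := by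
      have : (1:ℕ) ≤ 2*n := by omega
      push_cast [Nat.cast_sub this]
      ring
    rw [h1] at this
    convert this using 2 <;> push_cast <;> ring
  have hgeom : (2*n+1:ℝ)^d - (2*n-1:ℝ)^d
      ≤ (d:ℝ) * (2*(n:ℝ)+1)^(d-1) * 2 := by
    have := geom_sum₂_mul (2*(n:ℝ)+1) (2*(n:ℝ)-1) d
    have hxy : (2*(n:ℝ)+1) - (2*(n:ℝ)-1) = 2 := by ring
    have hterm : ∀ i ∈ Finset.range d,
        (2*(n:ℝ)+1)^i * (2*(n:ℝ)-1)^(d-1-i) ≤ (2*(n:ℝ)+1)^(d-1) := by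
      intro i hi
      rw [Finset.mem_range] at hi
      have hy0 : (0:ℝ) ≤ 2*(n:ℝ)-1 := by
        have : (1:ℝ) ≤ (n:ℝ) := by exact_mod_cast hn
        linarith
      have hyx : (2*(n:ℝ)-1) ≤ 2*(n:ℝ)+1 := by linarith
      calc (2*(n:ℝ)+1)^i * (2*(n:ℝ)-1)^(d-1-i)
          ≤ (2*(n:ℝ)+1)^i * (2*(n:ℝ)+1)^(d-1-i) := by
            apply mul_le_mul_of_nonneg_left (pow_le_pow_left₀ hy0 hyx _)
            positivity
        _ = (2*(n:ℝ)+1)^(d-1) := by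
            rw [← pow_add]
            congr 1
            omega
    calc (2*(n:ℝ)+1)^d - (2*(n:ℝ)-1)^d
        = (∑ i ∈ Finset.range d, (2*(n:ℝ)+1)^i * (2*(n:ℝ)-1)^(d-1-i)) * 2 := by
          rw [← this, hxy]
      _ ≤ ((d:ℝ) * (2*(n:ℝ)+1)^(d-1)) * 2 := by
          apply mul_le_mul_of_nonneg_right _ (by norm_num)
          calc ∑ i ∈ Finset.range d, (2*(n:ℝ)+1)^i * (2*(n:ℝ)-1)^(d-1-i)
              ≤ ∑ _i ∈ Finset.range d, (2*(n:ℝ)+1)^(d-1) := Finset.sum_le_sum hterm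
            _ = (d:ℝ) * (2*(n:ℝ)+1)^(d-1) := by
                simp [Finset.sum_const, Finset.card_range]
      _ = (d:ℝ) * (2*(n:ℝ)+1)^(d-1) * 2 := by ring
  have h3n : (2*(n:ℝ)+1) ≤ 3*(n:ℝ) := by
    have : (1:ℝ) ≤ (n:ℝ) := by exact_mod_cast hn
    linarith
  have hfinal : (d:ℝ) * (2*(n:ℝ)+1)^(d-1) * 2 ≤ (2*d*3^(d-1):ℝ) * (n:ℝ)^((d:ℝ)-1) := by
    have hn0 : (0:ℝ) ≤ 2*(n:ℝ)+1 := by positivity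
    have h1 : (2*(n:ℝ)+1)^(d-1) ≤ (3*(n:ℝ))^(d-1) := pow_le_pow_left₀ hn0 h3n _
    have h2 : (3*(n:ℝ))^(d-1) = 3^(d-1) * (n:ℝ)^(d-1) := mul_pow _ _ _
    have h3 : (n:ℝ)^((d:ℝ)-1) = (n:ℝ)^(d-1 : ℕ) := by
      rw [← Real.rpow_natCast (n:ℝ) (d-1)]
      congr 1
      have : ((d-1 : ℕ) : ℝ) = (d:ℝ) - 1 := by
        push_cast [Nat.cast_sub hd]
        ring
      rw [this]
    rw [h3]
    nlinarith [pow_nonneg (Nat.cast_nonneg (n:ℕ) : (0:ℝ) ≤ n) (d-1),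
      (Nat.cast_pos (α := ℝ)).mpr hd]
  calc ((F.filter fun l => ns l = n).card : ℝ)
      ≤ (2*n+1:ℝ)^d - (2*n-1:ℝ)^d := hcast
    _ ≤ (d:ℝ) * (2*(n:ℝ)+1)^(d-1) * 2 := by
        convert hgeom using 2 <;> push_cast <;> ring
    _ ≤ _ := hfinal


/-- reduction of a lattice sum to a 1-dimensional sum over sup-norm shells -/
lemma key_sum (hd : 0 < d) (F : Finset (Fin d → ℤ)) (h : ℕ → ℝ) (hh : ∀ n, 0 ≤ h n) :
    ∑ l ∈ F, (if 1 ≤ ns l then h (ns l) else 0)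
      ≤ (2*d*3^(d-1) : ℝ) * ∑ n ∈ Finset.Icc 1 (F.sup ns), (n:ℝ)^((d:ℝ)-1) * h n := by
  classical
  set M := F.sup ns with hM
  set F' := F.filter fun l => 1 ≤ ns l with hF'
  have h1 : ∑ l ∈ F, (if 1 ≤ ns l then h (ns l) else 0) = ∑ l ∈ F', h (ns l) := by
    rw [hF', Finset.sum_filter]
  rw [h1]
  have hmaps : ∀ l ∈ F', ns l ∈ Finset.Icc 1 M := by
    intro l hl
    rw [hF', Finset.mem_filter] at hl
    rw [Finset.mem_Icc]
    exact ⟨hl.2, Finset.le_sup hl.1⟩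
  rw [← Finset.sum_fiberwise_of_maps_to hmaps]
  rw [Finset.mul_sum]
  apply Finset.sum_le_sum
  intro n hn
  rw [Finset.mem_Icc] at hn
  have hinner : ∑ l ∈ F'.filter (fun l => ns l = n), h (ns l)
      = ((F'.filter fun l => ns l = n).card : ℝ) * h n := by
    have hcongr : ∀ l ∈ F'.filter (fun l => ns l = n), h (ns l) = h n := by
      intro l hl
      rw [Finset.mem_filter] at hl
      rw [hl.2]
    rw [Finset.sum_congr rfl hcongr, Finset.sum_const, nsmul_eq_mul]
  rw [hinner]
  have hcard := card_filter_ns_eq hd F' n hn.1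
  calc ((F'.filter fun l => ns l = n).card : ℝ) * h n
      ≤ ((2*d*3^(d-1) : ℝ) * (n:ℝ)^((d:ℝ)-1)) * h n :=
        mul_le_mul_of_nonneg_right hcard (hh n)
    _ = (2*d*3^(d-1) : ℝ) * ((n:ℝ)^((d:ℝ)-1) * h n) := by ring

/-- 1-dimensional tail estimate -/
lemma one_dim_tail {r : ℝ} (hr : 1 < r) :
    ∃ C : ℝ, 0 < C ∧ ∀ (A : ℝ), 1 ≤ A → ∀ M : ℕ,
      ∑ n ∈ Finset.Icc 1 M, (if A ≤ (n:ℝ) then (n:ℝ)^(-r) else 0)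
        ≤ C * A^(1-r) := by
  have hr1 : (0:ℝ) < r - 1 := by linarith
  refine ⟨1 + 1/(r-1), by positivity, ?_⟩
  intro A hA M
  have hA0 : 0 < A := by linarith
  set m := ⌈A⌉₊ with hm
  have hm1 : 1 ≤ m := Nat.one_le_ceil_iff.mpr (by linarith)
  have hAm : A ≤ (m:ℝ) := Nat.le_ceil A
  -- restrict sum to Icc m M
  have hstep1 : ∑ n ∈ Finset.Icc 1 M, (if A ≤ (n:ℝ) then (n:ℝ)^(-r) else 0)
      ≤ ∑ n ∈ Finset.Icc m M, (n:ℝ)^(-r) := by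
    rw [show (∑ n ∈ Finset.Icc 1 M, if A ≤ (n:ℝ) then (n:ℝ)^(-r) else 0)
        = ∑ n ∈ (Finset.Icc 1 M).filter (fun n : ℕ => A ≤ (n:ℝ)), (n:ℝ)^(-r) from
        (Finset.sum_filter _ _).symm]
    apply Finset.sum_le_sum_of_subset_of_nonneg
    · intro n hn
      rw [Finset.mem_filter, Finset.mem_Icc] at hn
      rw [Finset.mem_Icc]
      exact ⟨Nat.ceil_le.mpr hn.2, hn.1.2⟩
    · intro n _ _
      positivity
  refine hstep1.trans ?_
  by_cases hmM : m ≤ M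
  swap
  · rw [Finset.Icc_eq_empty (by omega), Finset.sum_empty]
    positivity
  -- split off the first term
  rw [Finset.Icc_eq_cons_Ioc hmM, Finset.sum_cons]
  have hterm1 : (m:ℝ)^(-r) ≤ A^(1-r) := by
    calc (m:ℝ)^(-r) ≤ A^(-r) := Real.rpow_le_rpow_of_nonpos hA0 hAm (by linarith)
      _ ≤ A^(1-r) := Real.rpow_le_rpow_of_exponent_le hA (by linarith)
  have htail : ∑ n ∈ Finset.Ioc m M, (n:ℝ)^(-r) ≤ (1/(r-1)) * A^(1-r) := by
    have hreindex : ∑ n ∈ Finset.Ioc m M, (n:ℝ)^(-r)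
        = ∑ i ∈ Finset.range (M - m), ((m:ℝ) + (i+1:ℕ))^(-r) := by
      have : Finset.Ioc m M = Finset.Ico (m+1) (M+1) := by
        ext x; simp [Finset.mem_Ioc, Finset.mem_Ico]
      rw [this, Finset.sum_Ico_eq_sum_range]
      apply Finset.sum_congr (by congr 1; omega)
      intro i _
      congr 1
      push_cast
      ring
    have hanti : AntitoneOn (fun x : ℝ => x^(-r)) (Set.Icc (m:ℝ) ((m:ℝ) + (M - m : ℕ))) := by
      intro x hx y hy hxy
      have hx0 : 0 < x := lt_of_lt_of_le (by exact_mod_cast hm1) hx.1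
      exact Real.rpow_le_rpow_of_nonpos hx0 hxy (by linarith)
    have hint := hanti.sum_le_integral
    rw [hreindex]
    refine hint.trans ?_
    have hm0 : (0:ℝ) < m := by exact_mod_cast hm1
    have hnotin : (0:ℝ) ∉ Set.uIcc (m:ℝ) ((m:ℝ) + (M-m:ℕ)) := by
      rw [Set.uIcc_of_le (le_add_of_nonneg_right (Nat.cast_nonneg _)), Set.mem_Icc]
      push_neg
      intro hc
      linarith
    have hne : -r ≠ -1 := by
      intro hc
      have : r = 1 := by linarith
      linarith
    rw [integral_rpow (Or.inr ⟨hne, hnotin⟩)]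
    have hle : ((m:ℝ) + (M-m:ℕ))^(-r+1) ≥ 0 := by positivity
    have hmexp : (m:ℝ)^(-r+1) ≤ A^(1-r) := by
      have : (-r+1) = 1-r := by ring
      rw [this]
      exact Real.rpow_le_rpow_of_nonpos hA0 hAm (by linarith)
    have hrn : -r + 1 < 0 := by linarith
    calc (((m:ℝ) + (M-m:ℕ))^(-r+1) - (m:ℝ)^(-r+1)) / (-r+1)
        = ((m:ℝ)^(-r+1) - ((m:ℝ) + (M-m:ℕ))^(-r+1)) / (r-1) := by
          rw [div_eq_div_iff (by linarith) (by linarith)]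
          ring
      _ ≤ (m:ℝ)^(-r+1) / (r-1) := by
          gcongr
          linarith
      _ ≤ A^(1-r) / (r-1) := by
          gcongr
      _ = (1/(r-1)) * A^(1-r) := by ring
  calc (m:ℝ)^(-r) + ∑ n ∈ Finset.Ioc m M, (n:ℝ)^(-r)
      ≤ A^(1-r) + (1/(r-1)) * A^(1-r) := add_le_add hterm1 htail
    _ = (1 + 1/(r-1)) * A^(1-r) := by ring


lemma harmonic_cut (N : ℝ) (hN : 1 ≤ N) (M : ℕ) :
    ∑ n ∈ Finset.Icc 1 M, (if (n:ℝ) ≤ N then (n:ℝ)⁻¹ else 0) ≤ 1 + Real.log N := by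
  set K := ⌊N⌋₊ with hK
  have hK1 : 1 ≤ K := Nat.le_floor (by exact_mod_cast hN)
  have h1 : ∑ n ∈ Finset.Icc 1 M, (if (n:ℝ) ≤ N then (n:ℝ)⁻¹ else 0)
      ≤ ∑ n ∈ Finset.Icc 1 K, (n:ℝ)⁻¹ := by
    rw [show (∑ n ∈ Finset.Icc 1 M, if (n:ℝ) ≤ N then (n:ℝ)⁻¹ else 0)
        = ∑ n ∈ (Finset.Icc 1 M).filter (fun n : ℕ => (n:ℝ) ≤ N), (n:ℝ)⁻¹ from
        (Finset.sum_filter _ _).symm]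
    apply Finset.sum_le_sum_of_subset_of_nonneg
    · intro n hn
      rw [Finset.mem_filter, Finset.mem_Icc] at hn
      rw [Finset.mem_Icc]
      exact ⟨hn.1.1, Nat.le_floor hn.2⟩
    · intro n _ _
      positivity
  have h2 : ∑ n ∈ Finset.Icc 1 K, (n:ℝ)⁻¹ = (harmonic K : ℝ) := by
    rw [harmonic_eq_sum_Icc]
    push_cast
    rfl
  have h3 : (harmonic K : ℝ) ≤ 1 + Real.log K := harmonic_le_one_add_log K
  have h4 : Real.log (K:ℝ) ≤ Real.log N := by
    apply Real.log_le_log (by exact_mod_cast hK1)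
    exact Nat.floor_le (by linarith)
  linarith

lemma one_dim_partial (hd : 0 < d) {s : ℝ} (hs : 0 < s) :
    ∃ C : ℝ, 0 < C ∧ ∀ (N : ℝ), 1 ≤ N → ∀ M : ℕ,
      ∑ n ∈ Finset.Icc 1 M, (n:ℝ)^((d:ℝ)-1) * (if (n:ℝ) ≤ N then (n:ℝ)^(-s) else 0)
        ≤ C * N^(max ((d:ℝ)-s) 0) * (1 + Real.log N) := by
  have hlogpos : ∀ N : ℝ, 1 ≤ N → (0:ℝ) ≤ 1 + Real.log N := by
    intro N hN
    have := Real.log_nonneg hN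
    linarith
  rcases le_or_gt s (d:ℝ) with hle | hgt
  · -- s ≤ d : bound terms by n⁻¹ * N^(d-s)
    refine ⟨1, one_pos, ?_⟩
    intro N hN M
    have hmax : max ((d:ℝ)-s) 0 = (d:ℝ)-s := max_eq_left (by linarith)
    rw [hmax]
    have hterm : ∀ n ∈ Finset.Icc 1 M,
        (n:ℝ)^((d:ℝ)-1) * (if (n:ℝ) ≤ N then (n:ℝ)^(-s) else 0)
          ≤ N^((d:ℝ)-s) * (if (n:ℝ) ≤ N then (n:ℝ)⁻¹ else 0) := by
      intro n hn
      rw [Finset.mem_Icc] at hn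
      have hn0 : (0:ℝ) < (n:ℝ) := by exact_mod_cast hn.1
      by_cases hc : (n:ℝ) ≤ N
      · rw [if_pos hc, if_pos hc]
        have e1 : (n:ℝ)^((d:ℝ)-1) * (n:ℝ)^(-s) = (n:ℝ)⁻¹ * (n:ℝ)^((d:ℝ)-s) := by
          rw [← Real.rpow_add hn0, ← Real.rpow_neg_one (n:ℝ), ← Real.rpow_add hn0]
          congr 1
          ring
        rw [e1]
        rw [mul_comm (N^((d:ℝ)-s))]
        apply mul_le_mul_of_nonneg_left _ (by positivity)
        exact Real.rpow_le_rpow (le_of_lt hn0) hc (by linarith)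
      · rw [if_neg hc, if_neg hc, mul_zero, mul_zero]
    calc ∑ n ∈ Finset.Icc 1 M, (n:ℝ)^((d:ℝ)-1) * (if (n:ℝ) ≤ N then (n:ℝ)^(-s) else 0)
        ≤ ∑ n ∈ Finset.Icc 1 M, N^((d:ℝ)-s) * (if (n:ℝ) ≤ N then (n:ℝ)⁻¹ else 0) :=
          Finset.sum_le_sum hterm
      _ = N^((d:ℝ)-s) * ∑ n ∈ Finset.Icc 1 M, (if (n:ℝ) ≤ N then (n:ℝ)⁻¹ else 0) := by
          rw [Finset.mul_sum]
      _ ≤ N^((d:ℝ)-s) * (1 + Real.log N) := by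
          apply mul_le_mul_of_nonneg_left (harmonic_cut N hN M) (by positivity)
      _ = 1 * N^((d:ℝ)-s) * (1 + Real.log N) := by ring
  · -- s > d : tail estimate with A = 1
    have hr : 1 < s - (d:ℝ) + 1 := by linarith
    obtain ⟨C₁, hC₁, htail⟩ := one_dim_tail hr
    refine ⟨C₁, hC₁, ?_⟩
    intro N hN M
    have hmax : max ((d:ℝ)-s) 0 = 0 := max_eq_right (by linarith)
    rw [hmax, Real.rpow_zero]
    have hterm : ∀ n ∈ Finset.Icc 1 M,
        (n:ℝ)^((d:ℝ)-1) * (if (n:ℝ) ≤ N then (n:ℝ)^(-s) else 0)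
          ≤ (if (1:ℝ) ≤ (n:ℝ) then (n:ℝ)^(-(s - (d:ℝ) + 1)) else 0) := by
      intro n hn
      rw [Finset.mem_Icc] at hn
      have hn1 : (1:ℝ) ≤ (n:ℝ) := by exact_mod_cast hn.1
      have hn0 : (0:ℝ) < (n:ℝ) := by linarith
      rw [if_pos hn1]
      by_cases hc : (n:ℝ) ≤ N
      · rw [if_pos hc, ← Real.rpow_add hn0]
        apply le_of_eq
        congr 1
        ring
      · rw [if_neg hc, mul_zero]
        positivity
    calc ∑ n ∈ Finset.Icc 1 M, (n:ℝ)^((d:ℝ)-1) * (if (n:ℝ) ≤ N then (n:ℝ)^(-s) else 0)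
        ≤ ∑ n ∈ Finset.Icc 1 M, (if (1:ℝ) ≤ (n:ℝ) then (n:ℝ)^(-(s - (d:ℝ) + 1)) else 0) :=
          Finset.sum_le_sum hterm
      _ ≤ C₁ * (1:ℝ)^(1-(s - (d:ℝ) + 1)) := htail 1 le_rfl M
      _ = C₁ := by rw [Real.one_rpow, mul_one]
      _ ≤ C₁ * 1 * (1 + Real.log N) := by
          have := Real.log_nonneg hN
          nlinarith

lemma latA (hd : 0 < d) {s : ℝ} (hs : 0 < s) :
    ∃ C : ℝ, 0 < C ∧ ∀ (N : ℝ), 1 ≤ N → ∀ F : Finset (Fin d → ℤ),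
      ∑ l ∈ F, (if l ≠ 0 ∧ latticeNorm l ≤ N then latticeNorm l ^ (-s) else 0)
        ≤ C * N^(max ((d:ℝ)-s) 0) * (1 + Real.log N) := by
  classical
  obtain ⟨C₁, hC₁, hpart⟩ := one_dim_partial hd hs
  have hd0 : (0:ℝ) < (d:ℝ) := by exact_mod_cast hd
  refine ⟨(2*d*3^(d-1):ℝ) * C₁, by positivity, ?_⟩
  intro N hN F
  have hh : ∀ n : ℕ, (0:ℝ) ≤ (if (n:ℝ) ≤ N then (n:ℝ)^(-s) else 0) := by
    intro n
    split <;> positivity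
  have hpt : ∀ l ∈ F, (if l ≠ 0 ∧ latticeNorm l ≤ N then latticeNorm l ^ (-s) else 0)
      ≤ (if 1 ≤ ns l then (if ((ns l : ℕ):ℝ) ≤ N then ((ns l:ℕ):ℝ)^(-s) else 0) else 0) := by
    intro l _
    by_cases hc : l ≠ 0 ∧ latticeNorm l ≤ N
    · rw [if_pos hc, if_pos (one_le_ns hc.1)]
      have h1 : (1:ℝ) ≤ (ns l : ℝ) := by exact_mod_cast one_le_ns hc.1
      have h2 : (ns l : ℝ) ≤ latticeNorm l := ns_le_latticeNorm hd l
      rw [if_pos (h2.trans hc.2)]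
      exact Real.rpow_le_rpow_of_nonpos (by linarith) h2 (by linarith)
    · rw [if_neg hc]
      split
      · exact hh _
      · exact le_refl 0
  calc ∑ l ∈ F, (if l ≠ 0 ∧ latticeNorm l ≤ N then latticeNorm l ^ (-s) else 0)
      ≤ ∑ l ∈ F, (if 1 ≤ ns l then (if ((ns l:ℕ):ℝ) ≤ N then ((ns l:ℕ):ℝ)^(-s) else 0) else 0) :=
        Finset.sum_le_sum hpt
    _ ≤ (2*d*3^(d-1) : ℝ) * ∑ n ∈ Finset.Icc 1 (F.sup ns),
          (n:ℝ)^((d:ℝ)-1) * (if (n:ℝ) ≤ N then (n:ℝ)^(-s) else 0) :=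
        key_sum hd F _ hh
    _ ≤ (2*d*3^(d-1) : ℝ) * (C₁ * N^(max ((d:ℝ)-s) 0) * (1 + Real.log N)) := by
        apply mul_le_mul_of_nonneg_left (hpart N hN (F.sup ns)) (by positivity)
    _ = ((2*d*3^(d-1):ℝ) * C₁) * N^(max ((d:ℝ)-s) 0) * (1 + Real.log N) := by ring

lemma latB (hd : 0 < d) {s : ℝ} (hds : (d:ℝ) < s) :
    ∃ C : ℝ, 0 < C ∧ ∀ (N : ℝ), 1 ≤ N → ∀ F : Finset (Fin d → ℤ),
      ∑ l ∈ F, (if l ≠ 0 ∧ N < latticeNorm l then latticeNorm l ^ (-s) else 0)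
        ≤ C * N^((d:ℝ)-s) := by
  classical
  have hd0 : (0:ℝ) < (d:ℝ) := by exact_mod_cast hd
  have hr : 1 < s - (d:ℝ) + 1 := by linarith
  obtain ⟨C₁, hC₁, htail⟩ := one_dim_tail hr
  refine ⟨(2*d*3^(d-1):ℝ) * C₁ * (d:ℝ)^(s-(d:ℝ)), by positivity, ?_⟩
  intro N hN F
  set A : ℝ := max (N / (d:ℝ)) 1 with hA
  have hA1 : (1:ℝ) ≤ A := le_max_right _ _
  have hA0 : (0:ℝ) < A := by linarith
  have hh : ∀ n : ℕ, (0:ℝ) ≤ (if A ≤ (n:ℝ) then (n:ℝ)^(-s) else 0) := by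
    intro n
    split <;> positivity
  have hpt : ∀ l ∈ F, (if l ≠ 0 ∧ N < latticeNorm l then latticeNorm l ^ (-s) else 0)
      ≤ (if 1 ≤ ns l then (if A ≤ ((ns l:ℕ):ℝ) then ((ns l:ℕ):ℝ)^(-s) else 0) else 0) := by
    intro l _
    by_cases hc : l ≠ 0 ∧ N < latticeNorm l
    · rw [if_pos hc, if_pos (one_le_ns hc.1)]
      have h1 : (1:ℝ) ≤ (ns l : ℝ) := by exact_mod_cast one_le_ns hc.1
      have h2 : (ns l : ℝ) ≤ latticeNorm l := ns_le_latticeNorm hd l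
      have h3 : latticeNorm l ≤ (d:ℝ) * ns l := latticeNorm_le_d_mul_ns hd l
      have h4 : N / (d:ℝ) ≤ (ns l : ℝ) := by
        rw [div_le_iff₀ hd0]
        calc N ≤ latticeNorm l := le_of_lt hc.2
          _ ≤ (d:ℝ) * ns l := h3
          _ = (ns l : ℝ) * (d:ℝ) := by ring
      have hAle : A ≤ (ns l : ℝ) := max_le h4 h1
      rw [if_pos hAle]
      exact Real.rpow_le_rpow_of_nonpos (by linarith) h2 (by linarith)
    · rw [if_neg hc]
      split
      · exact hh _
      · exact le_refl 0
  have hmid : ∑ n ∈ Finset.Icc 1 (F.sup ns),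
      (n:ℝ)^((d:ℝ)-1) * (if A ≤ (n:ℝ) then (n:ℝ)^(-s) else 0)
        ≤ C₁ * A^(1-(s-(d:ℝ)+1)) := by
    have hterm : ∀ n ∈ Finset.Icc 1 (F.sup ns),
        (n:ℝ)^((d:ℝ)-1) * (if A ≤ (n:ℝ) then (n:ℝ)^(-s) else 0)
          ≤ (if A ≤ (n:ℝ) then (n:ℝ)^(-(s-(d:ℝ)+1)) else 0) := by
      intro n hn
      rw [Finset.mem_Icc] at hn
      have hn0 : (0:ℝ) < (n:ℝ) := by exact_mod_cast hn.1
      by_cases hc : A ≤ (n:ℝ)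
      · rw [if_pos hc, if_pos hc, ← Real.rpow_add hn0]
        apply le_of_eq
        congr 1
        ring
      · rw [if_neg hc, if_neg hc, mul_zero]
    exact (Finset.sum_le_sum hterm).trans (htail A hA1 (F.sup ns))
  have hAfin : A^(1-(s-(d:ℝ)+1)) ≤ N^((d:ℝ)-s) * (d:ℝ)^(s-(d:ℝ)) := by
    have he : 1-(s-(d:ℝ)+1) = (d:ℝ)-s := by ring
    rw [he]
    have hNd0 : (0:ℝ) < N / (d:ℝ) := by positivity
    have h5 : A^((d:ℝ)-s) ≤ (N/(d:ℝ))^((d:ℝ)-s) :=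
      Real.rpow_le_rpow_of_nonpos hNd0 (le_max_left _ _) (by linarith)
    refine h5.trans (le_of_eq ?_)
    rw [Real.div_rpow (by linarith) (le_of_lt hd0)]
    rw [div_eq_mul_inv, ← Real.rpow_neg (le_of_lt hd0)]
    congr 1
    ring
  calc ∑ l ∈ F, (if l ≠ 0 ∧ N < latticeNorm l then latticeNorm l ^ (-s) else 0)
      ≤ ∑ l ∈ F, (if 1 ≤ ns l then (if A ≤ ((ns l:ℕ):ℝ) then ((ns l:ℕ):ℝ)^(-s) else 0) else 0) :=
        Finset.sum_le_sum hpt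
    _ ≤ (2*d*3^(d-1) : ℝ) * ∑ n ∈ Finset.Icc 1 (F.sup ns),
          (n:ℝ)^((d:ℝ)-1) * (if A ≤ (n:ℝ) then (n:ℝ)^(-s) else 0) :=
        key_sum hd F _ hh
    _ ≤ (2*d*3^(d-1) : ℝ) * (C₁ * A^(1-(s-(d:ℝ)+1))) := by
        apply mul_le_mul_of_nonneg_left hmid (by positivity)
    _ ≤ (2*d*3^(d-1) : ℝ) * (C₁ * (N^((d:ℝ)-s) * (d:ℝ)^(s-(d:ℝ)))) := by
        apply mul_le_mul_of_nonneg_left _ (by positivity)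
        exact mul_le_mul_of_nonneg_left hAfin (le_of_lt hC₁)
    _ = ((2*d*3^(d-1):ℝ) * C₁ * (d:ℝ)^(s-(d:ℝ))) * N^((d:ℝ)-s) := by ring

end LatAux

/- Lemma 2.2 (logarithmic case): for `α, γ > 0` with `α + γ > d` and `α = d` or `γ = d`,
there is `C < ∞` such that for every nonzero `k ∈ ℤ^d`,
`∑_{l+m=k, l≠0, m≠0} 1/(|m|^α |l|^γ) ≤ C (1+|k|)^{-β} log(1+|k|)`,
with `β = min{α, γ, α+γ-d}`. -/
set_option maxHeartbeats 1000000 in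
open LatAux in
/-- Lemma 2.2 (logarithmic case): for `α, γ > 0` with `α + γ > d` and `α = d` or `γ = d`,
there is `C < ∞` such that for every nonzero `k ∈ ℤ^d`,
`∑_{l+m=k, l≠0, m≠0} 1/(|m|^α |l|^γ) ≤ C (1+|k|)^{-β} log(1+|k|)`,
with `β = min{α, γ, α+γ-d}`. -/
theorem stmt1 (d : ℕ) (hd : 0 < d) (α γ : ℝ) (hα : 0 < α) (hγ : 0 < γ)
    (hsum : (d : ℝ) < α + γ) (hlog : α = (d : ℝ) ∨ γ = (d : ℝ)) :
    ∃ C : ℝ, 0 < C ∧ ∀ k : Fin d → ℤ, k ≠ 0 →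
      (∑' l : Fin d → ℤ,
          if l ≠ 0 ∧ k - l ≠ 0 then
            1 / (latticeNorm (k - l) ^ α * latticeNorm l ^ γ)
          else 0)
        ≤ C * (1 + latticeNorm k) ^ (-(min α (min γ (α + γ - d))))
            * Real.log (1 + latticeNorm k) := by
  classical
  set β : ℝ := min α (min γ (α + γ - d)) with hβ
  have hβα : β ≤ α := min_le_left _ _
  have hβγ : β ≤ γ := (min_le_right _ _).trans (min_le_left _ _)
  have hβs : β ≤ α + γ - d := (min_le_right _ _).trans (min_le_right _ _)
  have hβ0 : 0 < β := by
    apply lt_min hα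
    apply lt_min hγ
    linarith
  obtain ⟨C₁, hC₁, hA1⟩ := latA hd hγ
  obtain ⟨C₂, hC₂, hA2⟩ := latA hd hα
  obtain ⟨C₃, hC₃, hB⟩ := latB hd hsum
  have hlog2 : (0:ℝ) < Real.log 2 := Real.log_pos one_lt_two
  set Cbig : ℝ := (2:ℝ)^α * C₁ + (2:ℝ)^γ * C₂ + 2 * C₃ with hCbig
  have hCbig0 : 0 < Cbig := by positivity
  refine ⟨Cbig * (2:ℝ)^β * (1 + 1/Real.log 2), by positivity, ?_⟩
  intro k hk
  set N : ℝ := latticeNorm k with hN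
  have hN1 : 1 ≤ N := one_le_latticeNorm hd hk
  have hN0 : 0 < N := by linarith
  -- pieces
  set p1 : (Fin d → ℤ) → ℝ := fun l =>
    if l ≠ 0 ∧ latticeNorm l ≤ N then latticeNorm l ^ (-γ) else 0 with hp1
  set q1 : (Fin d → ℤ) → ℝ := fun l =>
    if l ≠ 0 ∧ N < latticeNorm l then latticeNorm l ^ (-(α+γ)) else 0 with hq1
  set p2 : (Fin d → ℤ) → ℝ := fun l =>
    if (k-l) ≠ 0 ∧ latticeNorm (k-l) ≤ N then latticeNorm (k-l) ^ (-α) else 0 with hp2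
  set q2 : (Fin d → ℤ) → ℝ := fun l =>
    if (k-l) ≠ 0 ∧ N < latticeNorm (k-l) then latticeNorm (k-l) ^ (-(α+γ)) else 0 with hq2
  have hp1nn : ∀ l, 0 ≤ p1 l := by
    intro l; rw [hp1]; dsimp only; split
    · exact Real.rpow_nonneg (latticeNorm_nonneg _) _
    · exact le_refl 0
  have hq1nn : ∀ l, 0 ≤ q1 l := by
    intro l; rw [hq1]; dsimp only; split
    · exact Real.rpow_nonneg (latticeNorm_nonneg _) _
    · exact le_refl 0
  have hp2nn : ∀ l, 0 ≤ p2 l := by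
    intro l; rw [hp2]; dsimp only; split
    · exact Real.rpow_nonneg (latticeNorm_nonneg _) _
    · exact le_refl 0
  have hq2nn : ∀ l, 0 ≤ q2 l := by
    intro l; rw [hq2]; dsimp only; split
    · exact Real.rpow_nonneg (latticeNorm_nonneg _) _
    · exact le_refl 0
  -- pointwise majorization
  have hpoint : ∀ l : Fin d → ℤ,
      (if l ≠ 0 ∧ k - l ≠ 0 then
          1 / (latticeNorm (k - l) ^ α * latticeNorm l ^ γ) else 0)
        ≤ (2:ℝ)^α * N^(-α) * p1 l + q1 l + (2:ℝ)^γ * N^(-γ) * p2 l + q2 l := by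
    intro l
    have hT1 : 0 ≤ (2:ℝ)^α * N^(-α) * p1 l := by
      have := hp1nn l
      positivity
    have hT3 : 0 ≤ (2:ℝ)^γ * N^(-γ) * p2 l := by
      have := hp2nn l
      positivity
    by_cases hc : l ≠ 0 ∧ k - l ≠ 0
    swap
    · rw [if_neg hc]
      have := hq1nn l
      have := hq2nn l
      linarith
    rw [if_pos hc]
    set a : ℝ := latticeNorm l with ha
    set b : ℝ := latticeNorm (k-l) with hb
    have ha1 : 1 ≤ a := one_le_latticeNorm hd hc.1
    have hb1 : 1 ≤ b := one_le_latticeNorm hd hc.2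
    have ha0 : 0 < a := by linarith
    have hb0 : 0 < b := by linarith
    have htri : N ≤ a + b := by
      have he : l + (k - l) = k := by abel
      have ht := latticeNorm_triangle l (k-l)
      rw [he, ← hN, ← ha, ← hb] at ht
      linarith
    have hf : 1 / (b ^ α * a ^ γ) = b^(-α) * a^(-γ) := by
      rw [Real.rpow_neg (le_of_lt hb0), Real.rpow_neg (le_of_lt ha0), one_div, mul_inv]
    rw [hf]
    rcases le_or_gt a b with hab | hba
    · -- a ≤ b, so N ≤ 2b
      have hbN : N / 2 ≤ b := by linarith
      rcases le_or_gt a N with haN | haN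
      · -- main term 1
        have hp1v : p1 l = a^(-γ) := by
          rw [hp1]
          dsimp only
          rw [if_pos ⟨hc.1, haN⟩]
        have hbb : b^(-α) ≤ (2:ℝ)^α * N^(-α) := by
          have h1 : b^(-α) ≤ (N/2)^(-α) :=
            Real.rpow_le_rpow_of_nonpos (by linarith) hbN (by linarith)
          have h2 : (N/2)^(-α) = (2:ℝ)^α * N^(-α) := by
            rw [Real.div_rpow (by linarith) (by norm_num)]
            rw [div_eq_mul_inv, ← Real.rpow_neg (by norm_num : (0:ℝ) ≤ 2)]
            rw [neg_neg, mul_comm]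
          linarith [h1, h2.symm.le]
        have : b^(-α) * a^(-γ) ≤ (2:ℝ)^α * N^(-α) * p1 l := by
          rw [hp1v]
          apply mul_le_mul_of_nonneg_right hbb (by positivity)
        have := hq1nn l
        have := hq2nn l
        linarith
      · -- tail term q1
        have hq1v : q1 l = a^(-(α+γ)) := by
          rw [hq1]
          dsimp only
          rw [if_pos ⟨hc.1, haN⟩]
        have : b^(-α) * a^(-γ) ≤ q1 l := by
          rw [hq1v]
          have h1 : b^(-α) ≤ a^(-α) :=
            Real.rpow_le_rpow_of_nonpos ha0 hab (by linarith)
          have h2 : b^(-α) * a^(-γ) ≤ a^(-α) * a^(-γ) :=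
            mul_le_mul_of_nonneg_right h1 (by positivity)
          have h3 : a^(-α) * a^(-γ) = a^(-(α+γ)) := by
            rw [← Real.rpow_add ha0]
            congr 1
            ring
          linarith [h2, h3.le]
        have := hq2nn l
        linarith
    · -- b < a, so N ≤ 2a
      have haN2 : N / 2 ≤ a := by linarith
      rcases le_or_gt b N with hbN | hbN
      · -- main term 2
        have hp2v : p2 l = b^(-α) := by
          rw [hp2]
          dsimp only
          rw [if_pos ⟨hc.2, hbN⟩]
        have haa : a^(-γ) ≤ (2:ℝ)^γ * N^(-γ) := by
          have h1 : a^(-γ) ≤ (N/2)^(-γ) :=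
            Real.rpow_le_rpow_of_nonpos (by linarith) haN2 (by linarith)
          have h2 : (N/2)^(-γ) = (2:ℝ)^γ * N^(-γ) := by
            rw [Real.div_rpow (by linarith) (by norm_num)]
            rw [div_eq_mul_inv, ← Real.rpow_neg (by norm_num : (0:ℝ) ≤ 2)]
            rw [neg_neg, mul_comm]
          linarith [h1, h2.symm.le]
        have : b^(-α) * a^(-γ) ≤ (2:ℝ)^γ * N^(-γ) * p2 l := by
          rw [hp2v]
          calc b^(-α) * a^(-γ) = a^(-γ) * b^(-α) := by ring
            _ ≤ ((2:ℝ)^γ * N^(-γ)) * b^(-α) :=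
              mul_le_mul_of_nonneg_right haa (by positivity)
            _ = (2:ℝ)^γ * N^(-γ) * b^(-α) := by ring
        have := hq1nn l
        have := hq2nn l
        linarith
      · -- tail term q2
        have hq2v : q2 l = b^(-(α+γ)) := by
          rw [hq2]
          dsimp only
          rw [if_pos ⟨hc.2, hbN⟩]
        have : b^(-α) * a^(-γ) ≤ q2 l := by
          rw [hq2v]
          have h1 : a^(-γ) ≤ b^(-γ) :=
            Real.rpow_le_rpow_of_nonpos hb0 (le_of_lt hba) (by linarith)
          have h2 : b^(-α) * a^(-γ) ≤ b^(-α) * b^(-γ) :=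
            mul_le_mul_of_nonneg_left h1 (by positivity)
          have h3 : b^(-α) * b^(-γ) = b^(-(α+γ)) := by
            rw [← Real.rpow_add hb0]
            congr 1
            ring
          linarith [h2, h3.le]
        have := hq1nn l
        linarith
  -- finite sum bound
  have hfin : ∀ F : Finset (Fin d → ℤ),
      ∑ l ∈ F, (if l ≠ 0 ∧ k - l ≠ 0 then
          1 / (latticeNorm (k - l) ^ α * latticeNorm l ^ γ) else 0)
        ≤ Cbig * N^(-β) * (1 + Real.log N) := by
    intro F
    have hstep : ∑ l ∈ F, (if l ≠ 0 ∧ k - l ≠ 0 then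
        1 / (latticeNorm (k - l) ^ α * latticeNorm l ^ γ) else 0)
        ≤ (2:ℝ)^α * N^(-α) * (∑ l ∈ F, p1 l) + (∑ l ∈ F, q1 l)
          + (2:ℝ)^γ * N^(-γ) * (∑ l ∈ F, p2 l) + (∑ l ∈ F, q2 l) := by
      calc ∑ l ∈ F, (if l ≠ 0 ∧ k - l ≠ 0 then
          1 / (latticeNorm (k - l) ^ α * latticeNorm l ^ γ) else 0)
          ≤ ∑ l ∈ F, ((2:ℝ)^α * N^(-α) * p1 l + q1 l + (2:ℝ)^γ * N^(-γ) * p2 l + q2 l) :=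
            Finset.sum_le_sum (fun l _ => hpoint l)
        _ = (2:ℝ)^α * N^(-α) * (∑ l ∈ F, p1 l) + (∑ l ∈ F, q1 l)
            + (2:ℝ)^γ * N^(-γ) * (∑ l ∈ F, p2 l) + (∑ l ∈ F, q2 l) := by
            rw [Finset.sum_add_distrib, Finset.sum_add_distrib, Finset.sum_add_distrib,
              Finset.mul_sum, Finset.mul_sum]
    -- bounds on the four sums
    have hs1 : ∑ l ∈ F, p1 l ≤ C₁ * N^(max ((d:ℝ)-γ) 0) * (1 + Real.log N) := by
      rw [hp1]
      exact hA1 N hN1 F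
    have hs2 : ∑ l ∈ F, q1 l ≤ C₃ * N^((d:ℝ)-(α+γ)) := by
      rw [hq1]
      exact hB N hN1 F
    have hinj : ∀ x ∈ F, ∀ y ∈ F, k - x = k - y → x = y := by
      intro x _ y _ h
      have := sub_right_injective h
      exact this
    have hs3 : ∑ l ∈ F, p2 l ≤ C₂ * N^(max ((d:ℝ)-α) 0) * (1 + Real.log N) := by
      have himg : ∑ l ∈ F, p2 l
          = ∑ m ∈ F.image (fun l => k - l),
              (if m ≠ 0 ∧ latticeNorm m ≤ N then latticeNorm m ^ (-α) else 0) := by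
        rw [Finset.sum_image hinj]
      rw [himg]
      exact hA2 N hN1 _
    have hs4 : ∑ l ∈ F, q2 l ≤ C₃ * N^((d:ℝ)-(α+γ)) := by
      have himg : ∑ l ∈ F, q2 l
          = ∑ m ∈ F.image (fun l => k - l),
              (if m ≠ 0 ∧ N < latticeNorm m then latticeNorm m ^ (-(α+γ)) else 0) := by
        rw [Finset.sum_image hinj]
      rw [himg]
      exact hB N hN1 _
    -- exponent comparisons
    have hlogN : (0:ℝ) ≤ Real.log N := Real.log_nonneg hN1
    have hexp1 : N^(-α) * N^(max ((d:ℝ)-γ) 0) ≤ N^(-β) := by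
      rw [← Real.rpow_add hN0]
      apply Real.rpow_le_rpow_of_exponent_le hN1
      rcases le_or_gt ((d:ℝ)-γ) 0 with h | h
      · rw [max_eq_right h]; linarith
      · rw [max_eq_left (le_of_lt h)]; linarith
    have hexp2 : N^(-γ) * N^(max ((d:ℝ)-α) 0) ≤ N^(-β) := by
      rw [← Real.rpow_add hN0]
      apply Real.rpow_le_rpow_of_exponent_le hN1
      rcases le_or_gt ((d:ℝ)-α) 0 with h | h
      · rw [max_eq_right h]; linarith
      · rw [max_eq_left (le_of_lt h)]; linarith
    have hexp3 : N^((d:ℝ)-(α+γ)) ≤ N^(-β) :=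
      Real.rpow_le_rpow_of_exponent_le hN1 (by linarith)
    have hlog1 : (1:ℝ) ≤ 1 + Real.log N := by linarith
    -- combine
    have hb1' : (2:ℝ)^α * N^(-α) * (∑ l ∈ F, p1 l)
        ≤ (2:ℝ)^α * C₁ * N^(-β) * (1 + Real.log N) := by
      calc (2:ℝ)^α * N^(-α) * (∑ l ∈ F, p1 l)
          ≤ (2:ℝ)^α * N^(-α) * (C₁ * N^(max ((d:ℝ)-γ) 0) * (1 + Real.log N)) := by
            apply mul_le_mul_of_nonneg_left hs1 (by positivity)
        _ = (2:ℝ)^α * C₁ * (N^(-α) * N^(max ((d:ℝ)-γ) 0)) * (1 + Real.log N) := by ring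
        _ ≤ (2:ℝ)^α * C₁ * N^(-β) * (1 + Real.log N) := by
            apply mul_le_mul_of_nonneg_right _ (by linarith)
            apply mul_le_mul_of_nonneg_left hexp1 (by positivity)
    have hb3' : (2:ℝ)^γ * N^(-γ) * (∑ l ∈ F, p2 l)
        ≤ (2:ℝ)^γ * C₂ * N^(-β) * (1 + Real.log N) := by
      calc (2:ℝ)^γ * N^(-γ) * (∑ l ∈ F, p2 l)
          ≤ (2:ℝ)^γ * N^(-γ) * (C₂ * N^(max ((d:ℝ)-α) 0) * (1 + Real.log N)) := by
            apply mul_le_mul_of_nonneg_left hs3 (by positivity)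
        _ = (2:ℝ)^γ * C₂ * (N^(-γ) * N^(max ((d:ℝ)-α) 0)) * (1 + Real.log N) := by ring
        _ ≤ (2:ℝ)^γ * C₂ * N^(-β) * (1 + Real.log N) := by
            apply mul_le_mul_of_nonneg_right _ (by linarith)
            apply mul_le_mul_of_nonneg_left hexp2 (by positivity)
    have hb2' : ∑ l ∈ F, q1 l ≤ C₃ * N^(-β) * (1 + Real.log N) := by
      calc ∑ l ∈ F, q1 l ≤ C₃ * N^((d:ℝ)-(α+γ)) := hs2
        _ ≤ C₃ * N^(-β) := mul_le_mul_of_nonneg_left hexp3 (le_of_lt hC₃)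
        _ ≤ C₃ * N^(-β) * (1 + Real.log N) := by
            nlinarith [mul_nonneg (mul_nonneg (le_of_lt hC₃)
              (Real.rpow_nonneg (le_of_lt hN0) (-β))) hlogN]
    have hb4' : ∑ l ∈ F, q2 l ≤ C₃ * N^(-β) * (1 + Real.log N) := by
      calc ∑ l ∈ F, q2 l ≤ C₃ * N^((d:ℝ)-(α+γ)) := hs4
        _ ≤ C₃ * N^(-β) := mul_le_mul_of_nonneg_left hexp3 (le_of_lt hC₃)
        _ ≤ C₃ * N^(-β) * (1 + Real.log N) := by
            nlinarith [mul_nonneg (mul_nonneg (le_of_lt hC₃)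
              (Real.rpow_nonneg (le_of_lt hN0) (-β))) hlogN]
    calc ∑ l ∈ F, (if l ≠ 0 ∧ k - l ≠ 0 then
        1 / (latticeNorm (k - l) ^ α * latticeNorm l ^ γ) else 0)
        ≤ (2:ℝ)^α * N^(-α) * (∑ l ∈ F, p1 l) + (∑ l ∈ F, q1 l)
          + (2:ℝ)^γ * N^(-γ) * (∑ l ∈ F, p2 l) + (∑ l ∈ F, q2 l) := hstep
      _ ≤ (2:ℝ)^α * C₁ * N^(-β) * (1 + Real.log N)
          + C₃ * N^(-β) * (1 + Real.log N)
          + (2:ℝ)^γ * C₂ * N^(-β) * (1 + Real.log N)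
          + C₃ * N^(-β) * (1 + Real.log N) := by
          exact add_le_add (add_le_add (add_le_add hb1' hb2') hb3') hb4'
      _ = Cbig * N^(-β) * (1 + Real.log N) := by
          rw [hCbig]
          ring
  -- pass to the tsum
  have hbound0 : 0 ≤ Cbig * N^(-β) * (1 + Real.log N) := by
    have hlogN : (0:ℝ) ≤ Real.log N := Real.log_nonneg hN1
    exact mul_nonneg (mul_nonneg (le_of_lt hCbig0)
      (Real.rpow_nonneg (le_of_lt hN0) _)) (by linarith)
  have htsum : (∑' l : Fin d → ℤ,
      if l ≠ 0 ∧ k - l ≠ 0 then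
        1 / (latticeNorm (k - l) ^ α * latticeNorm l ^ γ) else 0)
      ≤ Cbig * N^(-β) * (1 + Real.log N) :=
    tsum_le_of_sum_le' hbound0 hfin
  refine htsum.trans ?_
  -- final conversion to (1+N)^(-β) * log (1+N)
  have h2N : 1 + N ≤ 2 * N := by linarith
  have h1N0 : (0:ℝ) < 1 + N := by linarith
  have hNbeta : N^(-β) ≤ (2:ℝ)^β * (1+N)^(-β) := by
    have h1 : (2*N)^(-β) ≤ (1+N)^(-β) :=
      Real.rpow_le_rpow_of_nonpos h1N0 h2N (by linarith)
    have h2 : (2*N)^(-β) = (2:ℝ)^(-β) * N^(-β) :=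
      Real.mul_rpow (by norm_num) (le_of_lt hN0)
    have h3 : N^(-β) = (2:ℝ)^β * (2*N)^(-β) := by
      rw [h2, ← mul_assoc, ← Real.rpow_add (by norm_num : (0:ℝ) < 2)]
      rw [add_neg_cancel, Real.rpow_zero, one_mul]
    rw [h3]
    apply mul_le_mul_of_nonneg_left h1 (by positivity)
  have hlogconv : 1 + Real.log N ≤ (1 + 1/Real.log 2) * Real.log (1+N) := by
    have hl1 : Real.log 2 ≤ Real.log (1+N) :=
      Real.log_le_log (by norm_num) (by linarith)
    have hl2 : Real.log N ≤ Real.log (1+N) :=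
      Real.log_le_log hN0 (by linarith)
    have hl3 : (1:ℝ) ≤ Real.log (1+N) / Real.log 2 := by
      rw [le_div_iff₀ hlog2]
      linarith
    have hl4 : (0:ℝ) < Real.log (1+N) := by linarith
    calc 1 + Real.log N ≤ Real.log (1+N)/Real.log 2 + Real.log (1+N) := by linarith
      _ = (1 + 1/Real.log 2) * Real.log (1+N) := by ring
  have hlogN1 : (0:ℝ) ≤ 1 + Real.log N := by
    have := Real.log_nonneg hN1
    linarith
  have hfinal : Cbig * N^(-β) * (1 + Real.log N)
      ≤ (Cbig * (2:ℝ)^β * (1 + 1/Real.log 2)) * (1+N)^(-β) * Real.log (1+N) := by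
    have hx1 : Cbig * N^(-β) ≤ Cbig * ((2:ℝ)^β * (1+N)^(-β)) :=
      mul_le_mul_of_nonneg_left hNbeta (le_of_lt hCbig0)
    have hpos2 : (0:ℝ) ≤ Cbig * ((2:ℝ)^β * (1+N)^(-β)) := by positivity
    calc Cbig * N^(-β) * (1 + Real.log N)
        ≤ (Cbig * ((2:ℝ)^β * (1+N)^(-β))) * (1 + Real.log N) :=
          mul_le_mul_of_nonneg_right hx1 hlogN1
      _ ≤ (Cbig * ((2:ℝ)^β * (1+N)^(-β))) * ((1 + 1/Real.log 2) * Real.log (1+N)) :=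
          mul_le_mul_of_nonneg_left hlogconv hpos2
      _ = (Cbig * (2:ℝ)^β * (1 + 1/Real.log 2)) * (1+N)^(-β) * Real.log (1+N) := by
          ring
  exact hfinal
end

section
/- For the semi-implicit scheme u₋₁ ≡ 0, uₙ' = −uₙ + uₙ₋₁ uₙ, uₙ(0) = u₀ with u₀ ∈ [−1, 1], the sequence uₙ(t) converges as n → ∞, for each fixed t ≥ 0, to the solution u(t) of u' = −u + u², u(0) = u₀. -/
open Set Filter

/-- For `u₀ ∈ [-1, 1]`, the semi-implicit scheme `u₋₁ ≡ 0`, `uₙ' = -uₙ + uₙ₋₁ uₙ`,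
`uₙ(0) = u₀` converges, for each fixed `t ≥ 0`, to the solution of `u' = -u + u²`,
`u(0) = u₀`. -/
theorem stmt7 (u₀ : ℝ) (h : |u₀| ≤ 1)
    (useq : ℕ → ℝ → ℝ)
    (h0 : ∀ n, useq n 0 = u₀)
    (hode0 : ∀ t : ℝ, 0 ≤ t → HasDerivWithinAt (useq 0) (-(useq 0 t)) (Set.Ici 0) t)
    (hode : ∀ n, ∀ t : ℝ, 0 ≤ t →
      HasDerivWithinAt (useq (n + 1))
        (-(useq (n + 1) t) + useq n t * useq (n + 1) t) (Set.Ici 0) t)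
    (u : ℝ → ℝ) (hu0 : u 0 = u₀)
    (hu : ∀ t : ℝ, 0 ≤ t → HasDerivWithinAt u (-u t + (u t) ^ 2) (Set.Ici 0) t) :
    ∀ t : ℝ, 0 ≤ t → Tendsto (fun n => useq n t) atTop (nhds (u t)) := by
  -- continuity of the functions on `Ici 0`
  have cont : ∀ n, ContinuousOn (useq n) (Ici 0) := by
    intro n
    cases n with
    | zero => exact fun x hx => (hode0 x hx).continuousWithinAt
    | succ m => exact fun x hx => (hode m x hx).continuousWithinAt
  have contu : ContinuousOn u (Ici 0) := fun x hx => (hu x hx).continuousWithinAt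
  -- all the `useq n` are bounded by 1 in absolute value
  have hbnd : ∀ n, ∀ s : ℝ, 0 ≤ s → |useq n s| ≤ 1 := by
    intro n
    induction n with
    | zero =>
      intro s hs
      have hcontsq : ContinuousOn (fun y => useq 0 y ^ 2) (Icc 0 s) :=
        ((cont 0).mono Icc_subset_Ici_self).pow 2
      have hder : ∀ x ∈ Ico (0:ℝ) s, HasDerivWithinAt (fun y => useq 0 y ^ 2)
          ((2:ℝ) * useq 0 x ^ 1 * (-(useq 0 x))) (Ici x) x := fun x hx =>
        ((hode0 x hx.1).mono (Ici_subset_Ici.2 hx.1)).pow 2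
      have hinit : useq 0 0 ^ 2 ≤ 1 := by
        rw [h0]; nlinarith [sq_abs u₀, abs_nonneg u₀]
      have hbound : ∀ x ∈ Ico (0:ℝ) s,
          (2:ℝ) * useq 0 x ^ 1 * (-(useq 0 x)) ≤ 0 := by
        intro x hx; nlinarith [sq_nonneg (useq 0 x)]
      have hBc : ContinuousOn (fun _ : ℝ => (1:ℝ)) (Icc 0 s) := continuousOn_const
      have hBd : ∀ x ∈ Ico (0:ℝ) s,
          HasDerivWithinAt (fun _ : ℝ => (1:ℝ)) (0:ℝ) (Ici x) x := fun x _ =>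
        hasDerivWithinAt_const x _ 1
      have hbound' : ∀ x ∈ Ico (0:ℝ) s,
          (2:ℝ) * useq 0 x ^ 1 * (-(useq 0 x)) ≤ (fun _ : ℝ => (0:ℝ)) x := hbound
      have key := image_le_of_deriv_right_le_deriv_boundary
        (f := fun y => useq 0 y ^ 2)
        (f' := fun x => (2:ℝ) * useq 0 x ^ 1 * (-(useq 0 x)))
        (B := fun _ : ℝ => (1:ℝ)) (B' := fun _ : ℝ => (0:ℝ)) (a := 0) (b := s)
        hcontsq hder hinit hBc hBd hbound'
      have h2 := key ⟨hs, le_refl s⟩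
      rw [abs_le]; constructor <;> nlinarith
    | succ n ih =>
      intro s hs
      have hcontsq : ContinuousOn (fun y => useq (n+1) y ^ 2) (Icc 0 s) :=
        ((cont (n+1)).mono Icc_subset_Ici_self).pow 2
      have hder : ∀ x ∈ Ico (0:ℝ) s, HasDerivWithinAt (fun y => useq (n+1) y ^ 2)
          ((2:ℝ) * useq (n+1) x ^ 1 * (-(useq (n+1) x) + useq n x * useq (n+1) x))
          (Ici x) x := fun x hx =>
        ((hode n x hx.1).mono (Ici_subset_Ici.2 hx.1)).pow 2
      have hinit : useq (n+1) 0 ^ 2 ≤ 1 := by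
        rw [h0]; nlinarith [sq_abs u₀, abs_nonneg u₀]
      have hbound : ∀ x ∈ Ico (0:ℝ) s,
          (2:ℝ) * useq (n+1) x ^ 1 * (-(useq (n+1) x) + useq n x * useq (n+1) x)
            ≤ (fun _ : ℝ => (0:ℝ)) x := by
        intro x hx
        have hn := (abs_le.1 (ih x hx.1)).2
        simp only
        nlinarith [sq_nonneg (useq (n+1) x)]
      have hBc : ContinuousOn (fun _ : ℝ => (1:ℝ)) (Icc 0 s) := continuousOn_const
      have hBd : ∀ x ∈ Ico (0:ℝ) s,
          HasDerivWithinAt (fun _ : ℝ => (1:ℝ)) (0:ℝ) (Ici x) x := fun x _ =>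
        hasDerivWithinAt_const x _ 1
      have key := image_le_of_deriv_right_le_deriv_boundary
        (f := fun y => useq (n+1) y ^ 2)
        (f' := fun x => (2:ℝ) * useq (n+1) x ^ 1 *
          (-(useq (n+1) x) + useq n x * useq (n+1) x))
        (B := fun _ : ℝ => (1:ℝ)) (B' := fun _ : ℝ => (0:ℝ)) (a := 0) (b := s)
        hcontsq hder hinit hBc hBd hbound
      have h2 := key ⟨hs, le_refl s⟩
      rw [abs_le]; constructor <;> nlinarith
  intro t ht
  -- bound `u` on the compact interval `[0, t]`
  obtain ⟨M, hM⟩ := (isCompact_Icc (a := (0:ℝ)) (b := t)).exists_bound_of_continuousOn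
    (contu.mono Icc_subset_Ici_self)
  set K : ℝ := 1 + max M 1 with hKdef
  have hK2 : (2:ℝ) ≤ K := by
    have := le_max_right M 1; simp only [hKdef]; linarith
  have hK0 : (0:ℝ) < K := by linarith
  have hKu : ∀ x ∈ Icc (0:ℝ) t, |(-1 : ℝ) + u x| ≤ K := by
    intro x hx
    have h1 : |u x| ≤ M := by simpa [Real.norm_eq_abs] using hM x hx
    have h2 := le_max_left M 1
    calc |(-1 : ℝ) + u x| ≤ |(-1 : ℝ)| + |u x| := abs_add_le _ _
      _ ≤ 1 + M := by simp only [abs_neg, abs_one]; linarith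
      _ ≤ K := by simp only [hKdef]; linarith
  -- the main inductive estimate
  have main : ∀ n, ∀ s ∈ Icc (0:ℝ) t,
      |useq n s - u s| ≤ K ^ (n+1) * s ^ n / n.factorial * Real.exp (K * s) := by
    intro n
    induction n with
    | zero =>
      intro s hs
      have h1 : |u s| ≤ M := by simpa [Real.norm_eq_abs] using hM s hs
      have h2 := le_max_left M 1
      have h3 : (1:ℝ) ≤ Real.exp (K * s) :=
        Real.one_le_exp (mul_nonneg hK0.le hs.1)
      have h4 : |useq 0 s - u s| ≤ K := by
        calc |useq 0 s - u s| ≤ |useq 0 s| + |u s| := abs_sub _ _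
          _ ≤ 1 + M := by linarith [hbnd 0 s hs.1]
          _ ≤ K := by simp only [hKdef]; linarith
      have h5 : (0:ℝ) ≤ K ^ (0+1) * s ^ 0 / Nat.factorial 0 :=
        div_nonneg (mul_nonneg (pow_nonneg hK0.le _) (pow_nonneg hs.1 _))
          (Nat.cast_nonneg _)
      calc |useq 0 s - u s| ≤ K := h4
        _ = K ^ (0+1) * s ^ 0 / Nat.factorial 0 * 1 := by simp
        _ ≤ K ^ (0+1) * s ^ 0 / Nat.factorial 0 * Real.exp (K * s) :=
            mul_le_mul_of_nonneg_left h3 h5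
    | succ n ih =>
      intro s hs
      -- with slack δ > 0
      have H : ∀ δ : ℝ, 0 < δ →
          |useq (n+1) s - u s| ≤
            K ^ (n+2) * s ^ (n+1) / (n+1).factorial * Real.exp (K * s)
              + δ * Real.exp (K * s) := by
        intro δ hδ
        set B : ℝ → ℝ := fun x =>
          K ^ (n+2) * x ^ (n+1) / (n+1).factorial * Real.exp (K * x)
            + δ * Real.exp (K * x) with hBdef
        set B' : ℝ → ℝ := fun x =>
          (K ^ (n+2) * ((n+1) * x ^ n) / (n+1).factorial) * Real.exp (K * x)
            + (K ^ (n+2) * x ^ (n+1) / (n+1).factorial) * (Real.exp (K * x) * (K * 1))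
            + δ * (Real.exp (K * x) * (K * 1)) with hB'def
        have hexp : ∀ x : ℝ, HasDerivAt (fun y => Real.exp (K * y))
            (Real.exp (K * x) * (K * 1)) x := fun x =>
          ((hasDerivAt_id x).const_mul K).exp
        have hBd : ∀ x : ℝ, HasDerivAt B (B' x) x := by
          intro x
          have hpoly : HasDerivAt (fun y : ℝ => K ^ (n+2) * y ^ (n+1) / (n+1).factorial)
              (K ^ (n+2) * ((n+1) * x ^ n) / (n+1).factorial) x := by
            have := ((hasDerivAt_pow (n+1) x).const_mul (K ^ (n+2))).div_const
              ((n+1).factorial : ℝ)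
            simpa using this
          exact (hpoly.mul (hexp x)).add ((hexp x).const_mul δ)
        have hB0 : B 0 = δ := by
          simp [hBdef, pow_succ]
        have hf0 : ‖useq (n+1) 0 - u 0‖ ≤ B 0 := by
          rw [h0, hu0, sub_self, norm_zero, hB0]; exact hδ.le
        have hfcont : ContinuousOn (fun x => useq (n+1) x - u x) (Icc 0 t) :=
          ((cont (n+1)).mono Icc_subset_Ici_self).sub (contu.mono Icc_subset_Ici_self)
        have hfder : ∀ x ∈ Ico (0:ℝ) t,
            HasDerivWithinAt (fun x => useq (n+1) x - u x)
              ((-(useq (n+1) x) + useq n x * useq (n+1) x) - (-u x + (u x) ^ 2))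
              (Ici x) x := fun x hx =>
          ((hode n x hx.1).mono (Ici_subset_Ici.2 hx.1)).sub
            ((hu x hx.1).mono (Ici_subset_Ici.2 hx.1))
        have hbound : ∀ x ∈ Ico (0:ℝ) t,
            ‖useq (n+1) x - u x‖ = B x →
            ‖(-(useq (n+1) x) + useq n x * useq (n+1) x) - (-u x + (u x) ^ 2)‖ < B' x := by
          intro x hx heq
          rcases eq_or_lt_of_le hx.1 with hx0 | hx0
          · exfalso
            subst hx0
            rw [h0, hu0, sub_self, norm_zero, hB0] at heq
            linarith
          · have hxmem : x ∈ Icc (0:ℝ) t := ⟨hx.1, le_of_lt hx.2⟩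
            have hfx : (-(useq (n+1) x) + useq n x * useq (n+1) x) - (-u x + (u x) ^ 2)
                = ((-1 : ℝ) + u x) * (useq (n+1) x - u x)
                  + useq (n+1) x * (useq n x - u x) := by ring
            rw [Real.norm_eq_abs, hfx]
            have habs : |((-1 : ℝ) + u x) * (useq (n+1) x - u x)
                + useq (n+1) x * (useq n x - u x)|
                ≤ K * |useq (n+1) x - u x| + 1 * |useq n x - u x| := by
              calc |((-1 : ℝ) + u x) * (useq (n+1) x - u x)
                  + useq (n+1) x * (useq n x - u x)|
                  ≤ |((-1 : ℝ) + u x) * (useq (n+1) x - u x)|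
                    + |useq (n+1) x * (useq n x - u x)| := abs_add_le _ _
                _ = |(-1 : ℝ) + u x| * |useq (n+1) x - u x|
                    + |useq (n+1) x| * |useq n x - u x| := by rw [abs_mul, abs_mul]
                _ ≤ K * |useq (n+1) x - u x| + 1 * |useq n x - u x| := by
                    apply add_le_add
                    · exact mul_le_mul_of_nonneg_right (hKu x hxmem) (abs_nonneg _)
                    · exact mul_le_mul_of_nonneg_right (hbnd (n+1) x hx.1) (abs_nonneg _)
            have hIH := ih x hxmem
            rw [Real.norm_eq_abs] at heq
            have hBn_pos : (0:ℝ) < K ^ (n+1) * x ^ n / n.factorial * Real.exp (K * x) :=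
              mul_pos (div_pos (mul_pos (pow_pos hK0 _) (pow_pos hx0 _))
                (Nat.cast_pos.2 (Nat.factorial_pos n))) (Real.exp_pos _)
            have hfact : ((n+1).factorial : ℝ) = (n+1) * n.factorial := by
              push_cast [Nat.factorial_succ]; ring
            have hB'eq : B' x = K * (K ^ (n+1) * x ^ n / n.factorial * Real.exp (K * x))
                + K * B x := by
              simp only [hB'def, hBdef, hfact]
              have hnf : (n.factorial : ℝ) ≠ 0 :=
                Nat.cast_ne_zero.2 (Nat.factorial_pos n).ne'
              field_simp
              ring
            calc |((-1 : ℝ) + u x) * (useq (n+1) x - u x)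
                + useq (n+1) x * (useq n x - u x)|
                ≤ K * |useq (n+1) x - u x| + 1 * |useq n x - u x| := habs
              _ ≤ K * B x + 1 * (K ^ (n+1) * x ^ n / n.factorial * Real.exp (K * x)) := by
                  rw [heq]
                  exact add_le_add le_rfl (mul_le_mul_of_nonneg_left hIH (by norm_num))
              _ < K * B x + K * (K ^ (n+1) * x ^ n / n.factorial * Real.exp (K * x)) := by
                  have h1 : (1:ℝ) * (K ^ (n+1) * x ^ n / n.factorial * Real.exp (K * x))
                      < K * (K ^ (n+1) * x ^ n / n.factorial * Real.exp (K * x)) := by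
                    apply mul_lt_mul_of_pos_right _ hBn_pos
                    linarith
                  linarith
              _ = B' x := by rw [hB'eq]; ring
        have key := image_norm_le_of_norm_deriv_right_lt_deriv_boundary'
          (f := fun x => useq (n+1) x - u x)
          (f' := fun x => (-(useq (n+1) x) + useq n x * useq (n+1) x) - (-u x + (u x) ^ 2))
          (B := B) (B' := B') (a := 0) (b := t)
          hfcont hfder hf0
          (fun x _ => (hBd x).continuousAt.continuousWithinAt)
          (fun x _ => (hBd x).hasDerivWithinAt) hbound
        have := key hs
        simpa [Real.norm_eq_abs, hBdef] using this
      -- let δ → 0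
      apply le_of_forall_pos_le_add
      intro ε hε
      have hexp_pos : (0:ℝ) < Real.exp (K * s) := Real.exp_pos _
      have := H (ε / Real.exp (K * s)) (div_pos hε hexp_pos)
      calc |useq (n+1) s - u s|
          ≤ K ^ (n+2) * s ^ (n+1) / (n+1).factorial * Real.exp (K * s)
            + ε / Real.exp (K * s) * Real.exp (K * s) := this
        _ = K ^ (n+1+1) * s ^ (n+1) / (n+1).factorial * Real.exp (K * s) + ε := by
            field_simp
  -- conclude by squeezing
  have hlim : Tendsto (fun n : ℕ => K ^ (n+1) * t ^ n / n.factorial * Real.exp (K * t))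
      atTop (nhds 0) := by
    have h1 : Tendsto (fun n : ℕ => (K * t) ^ n / n.factorial) atTop (nhds 0) :=
      FloorSemiring.tendsto_pow_div_factorial_atTop (K * t)
    have heq : (fun n : ℕ => K ^ (n+1) * t ^ n / n.factorial * Real.exp (K * t))
        = fun n : ℕ => (K * t) ^ n / n.factorial * (K * Real.exp (K * t)) := by
      funext n
      rw [mul_pow]
      ring
    rw [heq]
    simpa using h1.mul_const (K * Real.exp (K * t))
  have hsq : Tendsto (fun n : ℕ => useq n t - u t) atTop (nhds 0) := by
    apply squeeze_zero_norm (fun n => ?_) hlim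
    simpa [Real.norm_eq_abs] using main n t ⟨ht, le_refl t⟩
  have := hsq.add_const (u t)
  simpa using this
end
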